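/- arXiv:2403.09071 — 6 statements merged into one kernel-verified Lean document; each statement's English description precedes it below -/
import Mathlib

section
/- There exists a constant C > 0 such that for every x = (x', x₃) ∈ ℝ³ with x₃ ∈ [−π, π], the series S(x) := Σ_{m=1}^∞ [ (|x'|² + (x₃ − 2mπ)²)^{−1/2} − 1/(2mπ) ] + Σ_{m=1}^∞ [ (|x'|² + (x₃ + 2mπ)²)^{−1/2} − 1/(2mπ) ] converges absolutely and satisfies |S(x)| ≤ C |x|, where |x| = (|x'|² + x₃²)^{1/2}. -/
open MeasureTheory Real intervalIntegral

/-- Euclidean norm on `ℝ²`. -/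
noncomputable def vnorm (x : ℝ × ℝ) : ℝ := Real.sqrt (x.1 ^ 2 + x.2 ^ 2)

/-- Rotation `R_a` on `ℝ²`. -/
noncomputable def vrot (a : ℝ) (x : ℝ × ℝ) : ℝ × ℝ :=
  (x.1 * Real.cos a + x.2 * Real.sin a, -x.1 * Real.sin a + x.2 * Real.cos a)

/-- Japanese bracket `⟨x⟩ = √(1+|x|²)` on `ℝ²`. -/
noncomputable def jap (x : ℝ × ℝ) : ℝ := Real.sqrt (1 + x.1 ^ 2 + x.2 ^ 2)

lemma key (r x3 a b : ℝ) (hr : 0 ≤ r) (hb : 2*π ≤ b) (hx3 : |x3| ≤ π)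
    (ha : |(|a|) - b| ≤ |x3|) :
    |1/Real.sqrt (r^2 + a^2) - 1/b| ≤ 2*(|x3| + r)/b^2 := by
  have hπ := Real.pi_pos
  have hb0 : 0 < b := by linarith
  have hab : b/2 ≤ |a| := by
    have h1 := (abs_le.mp ha).1
    linarith
  set S := Real.sqrt (r^2 + a^2) with hSdef
  have hS1 : |a| ≤ S := by
    rw [← Real.sqrt_sq_eq_abs]
    exact Real.sqrt_le_sqrt (by nlinarith)
  have hS2 : S ≤ |a| + r := by
    rw [show |a| + r = Real.sqrt ((|a| + r)^2) from
      (Real.sqrt_sq (by positivity)).symm]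
    apply Real.sqrt_le_sqrt
    have := abs_nonneg a
    nlinarith [sq_abs a]
  have hS0 : 0 < S := by linarith
  have heq : 1/S - 1/b = (b - S)/(S*b) := by field_simp
  rw [heq, abs_div, abs_of_pos (mul_pos hS0 hb0)]
  have hnum : |b - S| ≤ |x3| + r := by
    have h2 := abs_sub_le b |a| S
    have h3 : |b - (|a|)| ≤ |x3| := by rwa [abs_sub_comm]
    have h4 : |(|a|) - S| = S - |a| := abs_of_nonpos (by linarith) |>.trans (by ring)
    linarith
  have hc : |b - S| / (S*b) ≤ (|x3| + r)/(b^2/2) := by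
    apply div_le_div₀ (by positivity) hnum (by positivity)
    nlinarith
  have hc2 : (|x3| + r)/(b^2/2) = 2*(|x3| + r)/b^2 := by field_simp
  linarith

lemma hbase : Summable (fun m : ℕ => 1/((m:ℝ)+1)^2) := by
  have h0 : Summable (fun n : ℕ => 1/(n:ℝ)^2) :=
    Real.summable_one_div_nat_pow.mpr (by norm_num)
  have h2 := (summable_nat_add_iff 1).mpr h0
  simpa using h2

set_option maxHeartbeats 2000000 in
/-- the remainder series `S(x)` in the decomposition of the Green's
function on `ℝ² × 𝕋` converges absolutely and satisfies `|S(x)| ≤ C|x|` for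
`x₃ ∈ [−π, π]`. -/
theorem stmt_1 : ∃ C > (0:ℝ), ∀ (x' : ℝ × ℝ) (x3 : ℝ), x3 ∈ Set.Icc (-π) π →
    Summable (fun m : ℕ =>
      |1 / Real.sqrt (vnorm x' ^ 2 + (x3 - 2 * ((m : ℝ) + 1) * π) ^ 2)
        - 1 / (2 * ((m : ℝ) + 1) * π)|) ∧
    Summable (fun m : ℕ =>
      |1 / Real.sqrt (vnorm x' ^ 2 + (x3 + 2 * ((m : ℝ) + 1) * π) ^ 2)
        - 1 / (2 * ((m : ℝ) + 1) * π)|) ∧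
    |(∑' m : ℕ, (1 / Real.sqrt (vnorm x' ^ 2 + (x3 - 2 * ((m : ℝ) + 1) * π) ^ 2)
        - 1 / (2 * ((m : ℝ) + 1) * π)))
      + (∑' m : ℕ, (1 / Real.sqrt (vnorm x' ^ 2 + (x3 + 2 * ((m : ℝ) + 1) * π) ^ 2)
        - 1 / (2 * ((m : ℝ) + 1) * π)))|
      ≤ C * Real.sqrt (vnorm x' ^ 2 + x3 ^ 2) := by
  have hπ := Real.pi_pos
  set T : ℝ := ∑' m : ℕ, 1/((m:ℝ)+1)^2 with hTdef
  have hT : 0 ≤ T := tsum_nonneg (fun m => by positivity)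
  refine ⟨2*T/π^2 + 1, by positivity, ?_⟩
  intro x' x3 hx3
  set r : ℝ := vnorm x' with hrdef
  have hr : 0 ≤ r := Real.sqrt_nonneg _
  have hx3' : |x3| ≤ π := abs_le.mpr ⟨hx3.1, hx3.2⟩
  set K : ℝ := Real.sqrt (r^2 + x3^2) with hKdef
  have hK : 0 ≤ K := Real.sqrt_nonneg _
  have hrK : r ≤ K := by
    rw [show r = Real.sqrt (r^2) from (Real.sqrt_sq hr).symm]
    exact Real.sqrt_le_sqrt (by nlinarith)
  have hx3K : |x3| ≤ K := by
    rw [show |x3| = Real.sqrt (x3^2) from (Real.sqrt_sq_eq_abs x3).symm]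
    exact Real.sqrt_le_sqrt (by nlinarith)
  -- per-term bound
  have hb : ∀ m : ℕ, 2*π ≤ 2*((m:ℝ)+1)*π := by
    intro m
    have h1 : (1:ℝ) ≤ (m:ℝ)+1 := by
      have := Nat.cast_nonneg (α := ℝ) m; linarith
    nlinarith
  have hb0 : ∀ m : ℕ, 0 < 2*((m:ℝ)+1)*π := fun m => lt_of_lt_of_le (by linarith) (hb m)
  have hfinal : ∀ m : ℕ, 2*(|x3| + r)/(2*((m:ℝ)+1)*π)^2 ≤ K/π^2 * (1/((m:ℝ)+1)^2) := by
    intro m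
    have hm1 : (0:ℝ) < (m:ℝ)+1 := by positivity
    have h1 : 2*(|x3| + r)/(2*((m:ℝ)+1)*π)^2 ≤ 4*K/(2*((m:ℝ)+1)*π)^2 := by
      rw [div_le_div_iff_of_pos_right (by positivity)]
      linarith
    have h2 : 4*K/(2*((m:ℝ)+1)*π)^2 = K/π^2 * (1/((m:ℝ)+1)^2) := by
      field_simp
      ring
    linarith
  have hbnd1 : ∀ m : ℕ,
      |1 / Real.sqrt (r ^ 2 + (x3 - 2 * ((m : ℝ) + 1) * π) ^ 2)
        - 1 / (2 * ((m : ℝ) + 1) * π)| ≤ K/π^2 * (1/((m:ℝ)+1)^2) := by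
    intro m
    have h := abs_abs_sub_abs_le_abs_sub (x3 - 2*((m:ℝ)+1)*π) (-(2*((m:ℝ)+1)*π))
    rw [abs_neg, abs_of_pos (hb0 m),
      show x3 - 2*((m:ℝ)+1)*π - -(2*((m:ℝ)+1)*π) = x3 by ring] at h
    exact (key r x3 _ _ hr (hb m) hx3' h).trans (hfinal m)
  have hbnd2 : ∀ m : ℕ,
      |1 / Real.sqrt (r ^ 2 + (x3 + 2 * ((m : ℝ) + 1) * π) ^ 2)
        - 1 / (2 * ((m : ℝ) + 1) * π)| ≤ K/π^2 * (1/((m:ℝ)+1)^2) := by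
    intro m
    have h := abs_abs_sub_abs_le_abs_sub (x3 + 2*((m:ℝ)+1)*π) (2*((m:ℝ)+1)*π)
    rw [abs_of_pos (hb0 m),
      show x3 + 2*((m:ℝ)+1)*π - 2*((m:ℝ)+1)*π = x3 by ring] at h
    exact (key r x3 _ _ hr (hb m) hx3' h).trans (hfinal m)
  have hg : Summable (fun m : ℕ => K/π^2 * (1/((m:ℝ)+1)^2)) := hbase.mul_left _
  have hs1 : Summable (fun m : ℕ =>
      |1 / Real.sqrt (r ^ 2 + (x3 - 2 * ((m : ℝ) + 1) * π) ^ 2)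
        - 1 / (2 * ((m : ℝ) + 1) * π)|) :=
    Summable.of_nonneg_of_le (fun m => abs_nonneg _) hbnd1 hg
  have hs2 : Summable (fun m : ℕ =>
      |1 / Real.sqrt (r ^ 2 + (x3 + 2 * ((m : ℝ) + 1) * π) ^ 2)
        - 1 / (2 * ((m : ℝ) + 1) * π)|) :=
    Summable.of_nonneg_of_le (fun m => abs_nonneg _) hbnd2 hg
  refine ⟨hs1, hs2, ?_⟩
  have htg : ∑' m : ℕ, K/π^2 * (1/((m:ℝ)+1)^2) = K/π^2 * T := tsum_mul_left
  have ht1 : ∑' m : ℕ, |1 / Real.sqrt (r ^ 2 + (x3 - 2 * ((m : ℝ) + 1) * π) ^ 2)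
        - 1 / (2 * ((m : ℝ) + 1) * π)| ≤ K/π^2 * T := by
    rw [← htg]; exact Summable.tsum_le_tsum hbnd1 hs1 hg
  have ht2 : ∑' m : ℕ, |1 / Real.sqrt (r ^ 2 + (x3 + 2 * ((m : ℝ) + 1) * π) ^ 2)
        - 1 / (2 * ((m : ℝ) + 1) * π)| ≤ K/π^2 * T := by
    rw [← htg]; exact Summable.tsum_le_tsum hbnd2 hs2 hg
  have habs1 : |∑' m : ℕ, (1 / Real.sqrt (r ^ 2 + (x3 - 2 * ((m : ℝ) + 1) * π) ^ 2)
        - 1 / (2 * ((m : ℝ) + 1) * π))|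
      ≤ ∑' m : ℕ, |1 / Real.sqrt (r ^ 2 + (x3 - 2 * ((m : ℝ) + 1) * π) ^ 2)
        - 1 / (2 * ((m : ℝ) + 1) * π)| := by
    simpa only [Real.norm_eq_abs] using
      norm_tsum_le_tsum_norm (f := fun m : ℕ =>
        (1 / Real.sqrt (r ^ 2 + (x3 - 2 * ((m : ℝ) + 1) * π) ^ 2)
          - 1 / (2 * ((m : ℝ) + 1) * π)))
        (by simpa only [Real.norm_eq_abs] using hs1)
  have habs2 : |∑' m : ℕ, (1 / Real.sqrt (r ^ 2 + (x3 + 2 * ((m : ℝ) + 1) * π) ^ 2)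
        - 1 / (2 * ((m : ℝ) + 1) * π))|
      ≤ ∑' m : ℕ, |1 / Real.sqrt (r ^ 2 + (x3 + 2 * ((m : ℝ) + 1) * π) ^ 2)
        - 1 / (2 * ((m : ℝ) + 1) * π)| := by
    simpa only [Real.norm_eq_abs] using
      norm_tsum_le_tsum_norm (f := fun m : ℕ =>
        (1 / Real.sqrt (r ^ 2 + (x3 + 2 * ((m : ℝ) + 1) * π) ^ 2)
          - 1 / (2 * ((m : ℝ) + 1) * π)))
        (by simpa only [Real.norm_eq_abs] using hs2)
  have htri := abs_add_le
    (∑' m : ℕ, (1 / Real.sqrt (r ^ 2 + (x3 - 2 * ((m : ℝ) + 1) * π) ^ 2)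
        - 1 / (2 * ((m : ℝ) + 1) * π)))
    (∑' m : ℕ, (1 / Real.sqrt (r ^ 2 + (x3 + 2 * ((m : ℝ) + 1) * π) ^ 2)
        - 1 / (2 * ((m : ℝ) + 1) * π)))
  have hfin : 2*(K/π^2*T) ≤ (2*T/π^2+1)*K := by
    have h : (2*T/π^2+1)*K - 2*(K/π^2*T) = K := by ring
    linarith
  linarith
end

section
/- For all x, y ∈ ℝ² with (x, y) ≠ (0, 0), there holds the identity (1/(4π)) ∫_{−π}^{π} ∫_{−π}^{π} (|R_a x − R_b y|² + (a−b)²)^{−1/2} da db = (1/(4π)) ∫_{−2π}^{2π} (2π − |b|) (|x − R_b y|² + b²)^{−1/2} db; that is, K₁(x,y) equals the right-hand side. -/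
open MeasureTheory Real intervalIntegral

/-- The kernel `K₁` appearing in the energy of the helical Euler equation. -/
noncomputable def K1 (x y : ℝ × ℝ) : ℝ :=
  (1 / (4 * π)) * ∫ a in (-π)..π, ∫ b in (-π)..π,
    1 / Real.sqrt (vnorm (vrot a x - vrot b y) ^ 2 + (a - b) ^ 2)

lemma vrot_comp (a c : ℝ) (y : ℝ × ℝ) : vrot a (vrot c y) = vrot (a + c) y := by
  unfold vrot
  simp only [Real.cos_add, Real.sin_add, Prod.mk.injEq]
  constructor <;> ring

lemma vnorm_vrot (a : ℝ) (z : ℝ × ℝ) : vnorm (vrot a z) = vnorm z := by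
  unfold vnorm vrot
  congr 1
  simp only
  linear_combination (z.1 ^ 2 + z.2 ^ 2) * Real.sin_sq_add_cos_sq a

lemma vrot_sub (a : ℝ) (u v : ℝ × ℝ) : vrot a (u - v) = vrot a u - vrot a v := by
  unfold vrot
  simp only [Prod.fst_sub, Prod.snd_sub, Prod.mk_sub_mk, Prod.mk.injEq]
  constructor <;> ring

lemma vnorm_rot_sub (a b : ℝ) (x y : ℝ × ℝ) :
    vnorm (vrot a x - vrot b y) = vnorm (x - vrot (b - a) y) := by
  have h : vrot a x - vrot b y = vrot a (x - vrot (b - a) y) := by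
    rw [vrot_sub, vrot_comp]
    norm_num
  rw [h, vnorm_vrot]

lemma vnorm_sq (z : ℝ × ℝ) : vnorm z ^ 2 = z.1 ^ 2 + z.2 ^ 2 := by
  unfold vnorm
  rw [Real.sq_sqrt (by positivity)]

lemma vnorm_pos {z : ℝ × ℝ} (hz : z ≠ 0) : 0 < vnorm z := by
  unfold vnorm
  apply Real.sqrt_pos.2
  have h : z.1 ≠ 0 ∨ z.2 ≠ 0 := by
    by_contra h
    push_neg at h
    exact hz (Prod.ext h.1 h.2)
  rcases h with h | h
  · have := lt_of_le_of_ne (sq_nonneg z.1) (Ne.symm (pow_ne_zero 2 h))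
    nlinarith [sq_nonneg z.2]
  · have := lt_of_le_of_ne (sq_nonneg z.2) (Ne.symm (pow_ne_zero 2 h))
    nlinarith [sq_nonneg z.1]

lemma vrot_zero (y : ℝ × ℝ) : vrot 0 y = y := by
  unfold vrot
  simp

/-- the symmetrization identity for `K₁`. -/
theorem stmt_3 (x y : ℝ × ℝ) (hxy : ¬(x = 0 ∧ y = 0)) :
    K1 x y = (1 / (4 * π)) * ∫ b in (-(2 * π))..(2 * π),
      (2 * π - |b|) / Real.sqrt (vnorm (x - vrot b y) ^ 2 + b ^ 2) := by
  set f : ℝ → ℝ := fun c => 1 / Real.sqrt (vnorm (x - vrot c y) ^ 2 + c ^ 2) with hf_def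
  have key : ∀ a b : ℝ,
      1 / Real.sqrt (vnorm (vrot a x - vrot b y) ^ 2 + (a - b) ^ 2) = f (b - a) := by
    intro a b
    rw [hf_def]
    simp only
    rw [vnorm_rot_sub, show (a - b) ^ 2 = (b - a) ^ 2 by ring]
  have hrhs : ∀ b : ℝ,
      (2 * π - |b|) / Real.sqrt (vnorm (x - vrot b y) ^ 2 + b ^ 2) = (2 * π - |b|) * f b := by
    intro b
    rw [hf_def]
    simp only
    rw [mul_one_div]
  unfold K1
  simp only [key, hrhs]
  congr 1
  -- now goal : double integral of f (b - a) = ∫ (2π - |b|) * f b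
  by_cases hxeqy : x = y
  · -- degenerate case : both sides are junk zero
    have hx0 : x ≠ 0 := by
      intro h
      exact hxy ⟨h, by rw [← hxeqy]; exact h⟩
    set C : ℝ := Real.sqrt (x.1 ^ 2 + x.2 ^ 2 + 1) with hC_def
    have hC1 : 1 ≤ C := by
      have h := Real.sqrt_le_sqrt (show (1:ℝ) ≤ x.1 ^ 2 + x.2 ^ 2 + 1 by
        nlinarith [sq_nonneg x.1, sq_nonneg x.2])
      rwa [Real.sqrt_one] at h
    have hCpos : 0 < C := lt_of_lt_of_le one_pos hC1
    have hbound : ∀ c : ℝ, c ≠ 0 → |c|⁻¹ ≤ C * f c := by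
      intro c hc
      have hD : vnorm (x - vrot c y) ^ 2 + c ^ 2 ≤ (x.1 ^ 2 + x.2 ^ 2 + 1) * c ^ 2 := by
        rw [← hxeqy, vnorm_sq]
        have hcos : 1 - c ^ 2 / 2 ≤ Real.cos c := Real.one_sub_sq_div_two_le_cos
        have h1 : (x - vrot c x).1 = x.1 - (x.1 * Real.cos c + x.2 * Real.sin c) := rfl
        have h2 : (x - vrot c x).2 = x.2 - (-x.1 * Real.sin c + x.2 * Real.cos c) := rfl
        rw [h1, h2]
        nlinarith [Real.sin_sq_add_cos_sq c, sq_nonneg x.1, sq_nonneg x.2, sq_nonneg c]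
      have hc2 : 0 < c ^ 2 := lt_of_le_of_ne (sq_nonneg c) (Ne.symm (pow_ne_zero 2 hc))
      have hDpos : 0 < vnorm (x - vrot c y) ^ 2 + c ^ 2 := by
        nlinarith [sq_nonneg (vnorm (x - vrot c y))]
      have hsqrt : Real.sqrt (vnorm (x - vrot c y) ^ 2 + c ^ 2) ≤ C * |c| := by
        have h : C * |c| = Real.sqrt ((x.1 ^ 2 + x.2 ^ 2 + 1) * c ^ 2) := by
          rw [Real.sqrt_mul (by positivity), Real.sqrt_sq_eq_abs]
        rw [h]
        exact Real.sqrt_le_sqrt hD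
      have hs : 0 < Real.sqrt (vnorm (x - vrot c y) ^ 2 + c ^ 2) := Real.sqrt_pos.2 hDpos
      have hfc : f c = 1 / Real.sqrt (vnorm (x - vrot c y) ^ 2 + c ^ 2) := rfl
      rw [hfc, mul_one_div, inv_eq_one_div,
        div_le_div_iff₀ (abs_pos.2 hc) hs, one_mul]
      exact hsqrt
    have hfnonneg : ∀ c : ℝ, 0 ≤ f c := by
      intro c
      rw [hf_def]
      positivity
    -- inner integrals vanish
    have hinner : ∀ a ∈ Set.uIcc (-π) π, (∫ b in (-π)..π, f (b - a)) = 0 := by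
      intro a ha
      apply intervalIntegral.integral_undef
      apply not_intervalIntegrable_of_sub_inv_isBigO_punctured (c := a) ?_ (by
        have := Real.pi_pos; intro h; linarith) ha
      apply Asymptotics.IsBigO.of_bound C
      filter_upwards [self_mem_nhdsWithin] with b hb
      have hb' : b - a ≠ 0 := sub_ne_zero.2 hb
      have := hbound (b - a) hb'
      rw [Real.norm_eq_abs, Real.norm_eq_abs, abs_inv]
      rw [abs_of_nonneg (hfnonneg (b - a))]
      exact this
    have hlhs0 : (∫ a in (-π)..π, ∫ b in (-π)..π, f (b - a)) = 0 := by
      rw [intervalIntegral.integral_congr hinner]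
      simp
    have hrhs0 : (∫ b in (-(2 * π))..(2 * π), (2 * π - |b|) * f b) = 0 := by
      apply intervalIntegral.integral_undef
      apply not_intervalIntegrable_of_sub_inv_isBigO_punctured (c := 0) ?_ (by
        have := Real.pi_pos; intro h; linarith) (by
        have := Real.pi_pos
        rw [Set.mem_uIcc]; left; constructor <;> linarith)
      apply Asymptotics.IsBigO.of_bound (C / π)
      have hsmall : ∀ᶠ b in nhds (0 : ℝ), |b| < π := by
        have := Metric.ball_mem_nhds (0 : ℝ) Real.pi_pos
        filter_upwards [this] with b hb
        simpa [Real.dist_eq] using hb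
      filter_upwards [self_mem_nhdsWithin, eventually_nhdsWithin_of_eventually_nhds hsmall]
        with b hb hsb
      have hb0 : b - 0 ≠ 0 := by simpa using hb
      have h1 := hbound (b - 0) (by simpa using hb)
      simp only [sub_zero] at h1 ⊢
      have hπ : (0:ℝ) < π := Real.pi_pos
      have h2 : π ≤ 2 * π - |b| := by linarith
      have h3 : 0 ≤ f b := hfnonneg b
      rw [Real.norm_eq_abs, Real.norm_eq_abs, abs_inv]
      rw [abs_of_nonneg (by nlinarith : (0:ℝ) ≤ (2 * π - |b|) * f b)]
      have h4 : (C * f b) * π ≤ (C * f b) * (2 * π - |b|) :=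
        mul_le_mul_of_nonneg_left h2 (mul_nonneg hCpos.le h3)
      have h5 : |b|⁻¹ * π ≤ (C * f b) * π :=
        mul_le_mul_of_nonneg_right h1 hπ.le
      calc |b|⁻¹ ≤ C * f b := h1
        _ ≤ C / π * ((2 * π - |b|) * f b) := by
            rw [div_mul_eq_mul_div, le_div_iff₀ hπ]
            nlinarith [h4, h5]
    rw [hlhs0, hrhs0]
  · -- main case : x ≠ y, everything is continuous
    have hpos : ∀ c : ℝ, 0 < vnorm (x - vrot c y) ^ 2 + c ^ 2 := by
      intro c
      rcases eq_or_ne c 0 with rfl | hc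
      · have : x - vrot 0 y ≠ 0 := by
          rw [vrot_zero, sub_ne_zero]
          exact hxeqy
        have := vnorm_pos this
        nlinarith [sq_nonneg (0:ℝ)]
      · have := lt_of_le_of_ne (sq_nonneg c) (Ne.symm (pow_ne_zero 2 hc))
        nlinarith [sq_nonneg (vnorm (x - vrot c y))]
    have hgc : Continuous fun c : ℝ => vnorm (x - vrot c y) ^ 2 + c ^ 2 := by
      have : (fun c : ℝ => vnorm (x - vrot c y) ^ 2 + c ^ 2) =
          fun c : ℝ => ((x.1 - (y.1 * Real.cos c + y.2 * Real.sin c)) ^ 2 +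
            (x.2 - (-y.1 * Real.sin c + y.2 * Real.cos c)) ^ 2) + c ^ 2 := by
        funext c
        rw [vnorm_sq]
        rfl
      rw [this]
      fun_prop
    have hf : Continuous f := by
      rw [hf_def]
      apply Continuous.div continuous_const (Real.continuous_sqrt.comp hgc)
      intro c
      exact ne_of_gt (Real.sqrt_pos.2 (hpos c))
    have hint : ∀ u v : ℝ, IntervalIntegrable f volume u v := fun u v =>
      hf.intervalIntegrable u v
    set F : ℝ → ℝ := fun t => ∫ c in (0:ℝ)..t, f c with hF_def
    have hFcont : Continuous F := intervalIntegral.continuous_primitive hint 0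
    have hFderiv : ∀ t : ℝ, HasDerivAt F (f t) t := fun t =>
      (hf.integral_hasStrictDerivAt 0 t).hasDerivAt
    have step1 : ∀ a : ℝ, (∫ b in (-π)..π, f (b - a)) = F (π - a) - F (-π - a) := by
      intro a
      rw [intervalIntegral.integral_comp_sub_right f a, hF_def]
      simp only
      rw [intervalIntegral.integral_interval_sub_left (hint 0 (π - a)) (hint 0 (-π - a))]
    have step2 : (∫ a in (-π)..π, ∫ b in (-π)..π, f (b - a)) =
        (∫ u in (0:ℝ)..(2*π), F u) - ∫ u in (-(2*π))..(0:ℝ), F u := by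
      simp only [step1]
      have hi1 : IntervalIntegrable (fun a : ℝ => F (π - a)) volume (-π) π :=
        ((hFcont.comp (continuous_const.sub continuous_id)).intervalIntegrable _ _)
      have hi2 : IntervalIntegrable (fun a : ℝ => F (-π - a)) volume (-π) π :=
        ((hFcont.comp (continuous_const.sub continuous_id)).intervalIntegrable _ _)
      rw [intervalIntegral.integral_sub hi1 hi2]
      congr 1
      · rw [intervalIntegral.integral_comp_sub_left F (a := -π) (b := π) π]
        congr 1 <;> ring
      · rw [intervalIntegral.integral_comp_sub_left F (a := -π) (b := π) (-π)]
        congr 1 <;> ring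
    -- integration by parts on [0, 2π]
    have parts : ∀ u v : ℝ, (∫ t in u..v, F t) =
        F v * v - F u * u - ∫ t in u..v, f t * t := by
      intro u v
      have h := intervalIntegral.integral_mul_deriv_eq_deriv_mul
        (u := F) (v := fun t : ℝ => t) (u' := f) (v' := fun _ => (1:ℝ))
        (a := u) (b := v)
        (fun t _ => hFderiv t) (fun t _ => hasDerivAt_id t)
        (hint u v) (intervalIntegrable_const)
      simpa using h
    have hF0 : F 0 = 0 := intervalIntegral.integral_same
    have hright : (∫ u in (0:ℝ)..(2*π), F u) = ∫ t in (0:ℝ)..(2*π), (2*π - t) * f t := by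
      have hi1 : IntervalIntegrable (fun t : ℝ => 2 * π * f t) volume 0 (2*π) :=
        ((continuous_const.mul hf).intervalIntegrable _ _)
      have hi2 : IntervalIntegrable (fun t : ℝ => f t * t) volume 0 (2*π) :=
        ((hf.mul continuous_id).intervalIntegrable _ _)
      have hAB : (∫ t in (0:ℝ)..(2*π), (2*π - t) * f t)
          = 2 * π * (∫ t in (0:ℝ)..(2*π), f t) - ∫ t in (0:ℝ)..(2*π), f t * t := by
        rw [← intervalIntegral.integral_const_mul, ← intervalIntegral.integral_sub hi1 hi2]
        apply intervalIntegral.integral_congr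
        intro t _
        ring
      have hF2 : F (2*π) = ∫ t in (0:ℝ)..(2*π), f t := rfl
      rw [parts 0 (2*π), hF0, hAB, hF2]
      ring
    have hleft : (∫ u in (-(2*π))..(0:ℝ), F u) = - ∫ t in (-(2*π))..(0:ℝ), (2*π + t) * f t := by
      have hi1 : IntervalIntegrable (fun t : ℝ => 2 * π * f t) volume (-(2*π)) 0 :=
        ((continuous_const.mul hf).intervalIntegrable _ _)
      have hi2 : IntervalIntegrable (fun t : ℝ => f t * t) volume (-(2*π)) 0 :=
        ((hf.mul continuous_id).intervalIntegrable _ _)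
      have hFm : F (-(2*π)) = - ∫ t in (-(2*π))..(0:ℝ), f t := by
        rw [hF_def]
        simp only
        rw [intervalIntegral.integral_symm]
      have hAB : (∫ t in (-(2*π))..(0:ℝ), (2*π + t) * f t)
          = 2 * π * (∫ t in (-(2*π))..(0:ℝ), f t) + ∫ t in (-(2*π))..(0:ℝ), f t * t := by
        rw [← intervalIntegral.integral_const_mul, ← intervalIntegral.integral_add hi1 hi2]
        apply intervalIntegral.integral_congr
        intro t _
        ring
      rw [parts (-(2*π)) 0, hF0, hFm, hAB]
      ring
    have hsplit : (∫ b in (-(2*π))..(2*π), (2*π - |b|) * f b) =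
        (∫ b in (-(2*π))..(0:ℝ), (2*π - |b|) * f b) +
        ∫ b in (0:ℝ)..(2*π), (2*π - |b|) * f b := by
      rw [intervalIntegral.integral_add_adjacent_intervals (f := fun b => (2*π - |b|) * f b)
        (((continuous_const.sub (continuous_abs)).mul hf).intervalIntegrable _ _)
        (((continuous_const.sub (continuous_abs)).mul hf).intervalIntegrable _ _)]
    have habs1 : (∫ b in (-(2*π))..(0:ℝ), (2*π - |b|) * f b) =
        ∫ b in (-(2*π))..(0:ℝ), (2*π + b) * f b := by
      apply intervalIntegral.integral_congr
      intro b hb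
      have hππ := Real.pi_pos
      rw [Set.uIcc_of_le (by linarith)] at hb
      show (2 * π - |b|) * f b = (2 * π + b) * f b
      rw [abs_of_nonpos hb.2]
      ring
    have habs2 : (∫ b in (0:ℝ)..(2*π), (2*π - |b|) * f b) =
        ∫ b in (0:ℝ)..(2*π), (2*π - b) * f b := by
      apply intervalIntegral.integral_congr
      intro b hb
      have hππ := Real.pi_pos
      rw [Set.uIcc_of_le (by linarith)] at hb
      show (2 * π - |b|) * f b = (2 * π - b) * f b
      rw [abs_of_nonneg hb.1]
    rw [step2, hright, hleft, hsplit, habs1, habs2]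
    ring
end

section
/- There exists C > 0 such that for all x, y ∈ ℝ² with x ≠ y: ∫_{0}^{∞} (|x − R_a y|² + a²)^{−3/2} da ≤ C ( 1 + (1 + min{|x|, |y|}) / |x − y|² ). -/
open MeasureTheory Real intervalIntegral

lemma vnorm_nonneg (z : ℝ × ℝ) : 0 ≤ vnorm z := Real.sqrt_nonneg _

lemma polar (x y : ℝ × ℝ) : ∃ θ : ℝ, 0 ≤ θ ∧ θ ≤ 2 * π ∧
    x.1 * y.1 + x.2 * y.2 = vnorm x * vnorm y * Real.cos θ ∧
    x.1 * y.2 - x.2 * y.1 = vnorm x * vnorm y * Real.sin θ := by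
  set p := x.1 * y.1 + x.2 * y.2 with hp
  set q := x.1 * y.2 - x.2 * y.1 with hq
  have habs : ‖(⟨p, q⟩ : ℂ)‖ = vnorm x * vnorm y := by
    rw [Complex.norm_def, Complex.normSq_mk]
    unfold vnorm
    rw [← Real.sqrt_mul (by positivity)]
    congr 1
    simp only [hp, hq]; ring
  have hc := Complex.norm_mul_cos_arg ⟨p, q⟩
  have hs := Complex.norm_mul_sin_arg ⟨p, q⟩
  rw [habs] at hc hs
  simp only [] at hc hs
  set θ₀ := Complex.arg ⟨p, q⟩ with hθ₀
  have h1 : -π < θ₀ := Complex.neg_pi_lt_arg _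
  have h2 : θ₀ ≤ π := Complex.arg_le_pi _
  have hπ := Real.pi_pos
  rcases le_or_gt 0 θ₀ with h | h
  · exact ⟨θ₀, h, by linarith, hc.symm, hs.symm⟩
  · refine ⟨θ₀ + 2 * π, by linarith, by linarith, ?_, ?_⟩
    · rw [Real.cos_add_two_pi]; exact hc.symm
    · rw [Real.sin_add_two_pi]; exact hs.symm

lemma dist_formula (x y : ℝ × ℝ) {θ : ℝ}
    (hp : x.1 * y.1 + x.2 * y.2 = vnorm x * vnorm y * Real.cos θ)
    (hq : x.1 * y.2 - x.2 * y.1 = vnorm x * vnorm y * Real.sin θ) (a : ℝ) :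
    vnorm (x - vrot a y) ^ 2 =
      vnorm x ^ 2 + vnorm y ^ 2 - 2 * (vnorm x * vnorm y) * Real.cos (a - θ) := by
  have h1 := vnorm_sq (x - vrot a y)
  have hx := vnorm_sq x
  have hy := vnorm_sq y
  have hpy : (x - vrot a y).1 = x.1 - (y.1 * Real.cos a + y.2 * Real.sin a) := rfl
  have hpy2 : (x - vrot a y).2 = x.2 - (-y.1 * Real.sin a + y.2 * Real.cos a) := rfl
  rw [hpy, hpy2] at h1
  rw [h1, hx, hy, Real.cos_sub]
  have hpyth := Real.sin_sq_add_cos_sq a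
  linear_combination (y.1 ^ 2 + y.2 ^ 2) * hpyth + (-2 * Real.cos a) * hp +
    (-2 * Real.sin a) * hq

lemma trigA {θ u : ℝ} (h0 : 0 ≤ θ) (h2 : θ ≤ 2 * π) (hu1 : θ / 2 ≤ u) (hu2 : u ≤ θ) :
    (1 - Real.cos θ) / 4 ≤ 1 - Real.cos u := by
  have hπ := Real.pi_pos
  have hcos : Real.cos u ≤ max (Real.cos (θ / 2)) (Real.cos θ) := by
    rcases le_total u π with h | h
    · exact le_max_of_le_left (Real.cos_le_cos_of_nonneg_of_le_pi (by linarith) h hu1)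
    · have e1 : Real.cos u = Real.cos (2 * π - u) := (Real.cos_two_pi_sub u).symm
      have e2 : Real.cos θ = Real.cos (2 * π - θ) := (Real.cos_two_pi_sub θ).symm
      rw [e1, e2]
      exact le_max_of_le_right
        (Real.cos_le_cos_of_nonneg_of_le_pi (by linarith) (by linarith) (by linarith))
  have hhalf : Real.cos (θ / 2) ^ 2 = 1 / 2 + Real.cos (2 * (θ / 2)) / 2 := Real.cos_sq _
  rw [show 2 * (θ / 2) = θ by ring] at hhalf
  rcases le_max_iff.mp hcos with h | h
  · nlinarith [Real.cos_le_one (θ / 2), Real.neg_one_le_cos (θ / 2)]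
  · linarith [Real.cos_le_one θ]

lemma trigB {v : ℝ} (h : |v| ≤ π) : 2 / π ^ 2 * v ^ 2 ≤ 1 - Real.cos v := by
  have := Real.cos_le_one_sub_mul_cos_sq h
  linarith

lemma ftc_bound {c Q θ A B : ℝ} (hc : 0 < c) (hQ : 0 < Q) (hAB : A ≤ B) :
    (∫ a in A..B, 1 / Real.sqrt (c + Q * (a - θ) ^ 2) ^ 3) ≤ 2 / (c * Real.sqrt Q) := by
  have hpos : ∀ a : ℝ, 0 < c + Q * (a - θ) ^ 2 := fun a => by positivity
  set F : ℝ → ℝ := fun a => (a - θ) / (c * Real.sqrt (c + Q * (a - θ) ^ 2)) with hF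
  have hder : ∀ a : ℝ, HasDerivAt F (1 / Real.sqrt (c + Q * (a - θ) ^ 2) ^ 3) a := by
    intro a
    have h3 : HasDerivAt (fun b : ℝ => b - θ) 1 a := (hasDerivAt_id a).sub_const θ
    have h1 : HasDerivAt (fun b : ℝ => c + Q * (b - θ) ^ 2) (2 * Q * (a - θ)) a := by
      have := ((h3.pow 2).const_mul Q).const_add c
      refine this.congr_deriv ?_
      simp; ring
    have h2 := h1.sqrt (hpos a).ne'
    have h4 := h3.div (h2.const_mul c)
      (by positivity : c * Real.sqrt (c + Q * (a - θ) ^ 2) ≠ 0)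
    refine h4.congr_deriv ?_
    have hs := Real.sq_sqrt (hpos a).le
    have hs0 : 0 < Real.sqrt (c + Q * (a - θ) ^ 2) := Real.sqrt_pos.mpr (hpos a)
    field_simp
    linear_combination hs
  have hcont : Continuous (fun a : ℝ => 1 / Real.sqrt (c + Q * (a - θ) ^ 2) ^ 3) := by
    apply Continuous.div continuous_const
    · exact (Real.continuous_sqrt.comp (by continuity)).pow 3
    · intro a
      have := Real.sqrt_pos.mpr (hpos a)
      positivity
  have heq := intervalIntegral.integral_eq_sub_of_hasDerivAt
    (f := F) (f' := fun a => 1 / Real.sqrt (c + Q * (a - θ) ^ 2) ^ 3)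
    (fun a _ => hder a) (hcont.intervalIntegrable A B)
  rw [heq]
  have hFbound : ∀ a : ℝ, |F a| ≤ 1 / (c * Real.sqrt Q) := by
    intro a
    rw [hF]
    rcases eq_or_ne (a - θ) 0 with h | h
    · simp [h]; positivity
    · have h1 : Real.sqrt (Q * (a - θ) ^ 2) ≤ Real.sqrt (c + Q * (a - θ) ^ 2) :=
        Real.sqrt_le_sqrt (by nlinarith)
      have h2 : Real.sqrt (Q * (a - θ) ^ 2) = Real.sqrt Q * |a - θ| := by
        rw [Real.sqrt_mul hQ.le, Real.sqrt_sq_eq_abs]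
      have h3 : 0 < |a - θ| := abs_pos.mpr h
      have hQ' : 0 < Real.sqrt Q := Real.sqrt_pos.mpr hQ
      rw [abs_div, abs_of_pos (by positivity : (0:ℝ) < c * Real.sqrt (c + Q * (a - θ) ^ 2))]
      rw [div_le_div_iff₀ (by positivity) (by positivity)]
      calc |a - θ| * (c * Real.sqrt Q) = c * (Real.sqrt Q * |a - θ|) := by ring
        _ ≤ c * Real.sqrt (c + Q * (a - θ) ^ 2) := by
            rw [← h2]; exact mul_le_mul_of_nonneg_left h1 hc.le
        _ = 1 * (c * Real.sqrt (c + Q * (a - θ) ^ 2)) := by ring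
  have b1 := (abs_le.mp (hFbound B)).2
  have b2 := (abs_le.mp (hFbound A)).1
  have : 2 / (c * Real.sqrt Q) = 1 / (c * Real.sqrt Q) + 1 / (c * Real.sqrt Q) := by ring
  linarith

lemma cont_kernel {c Q θ : ℝ} (hc : 0 < c) (hQ : 0 ≤ Q) :
    Continuous (fun a : ℝ => 1 / Real.sqrt (c + Q * (a - θ) ^ 2) ^ 3) := by
  apply Continuous.div continuous_const
  · exact (Real.continuous_sqrt.comp (by continuity)).pow 3
  · intro a
    have h : 0 < c + Q * (a - θ) ^ 2 := by positivity
    have := Real.sqrt_pos.mpr h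
    positivity


lemma rs_min_bound {r s : ℝ} (hr0 : 0 ≤ r) (hs0 : 0 ≤ s)
    (h4 : (r - s) ^ 2 ≤ 4 * (r * s)) : Real.sqrt (r * s) ≤ 3 * min r s := by
  have h9 : r * s ≤ 9 * (min r s) ^ 2 := by
    rcases le_total r s with h | h
    · rw [min_eq_left h]; nlinarith [sq_nonneg (s - 6 * r), sq_nonneg r]
    · rw [min_eq_right h]; nlinarith [sq_nonneg (r - 6 * s), sq_nonneg s]
  have hm0 : 0 ≤ min r s := le_min hr0 hs0
  rw [show 3 * min r s = Real.sqrt ((3 * min r s) ^ 2) by rw [Real.sqrt_sq (by linarith)]]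
  apply Real.sqrt_le_sqrt; nlinarith

lemma arith_key {r s θ : ℝ} (hr0 : 0 ≤ r) (hs0 : 0 ≤ s) (hθ0 : 0 ≤ θ) :
    r ^ 2 + s ^ 2 - 2 * (r * s) * Real.cos θ ≤
      100 * (1 + min r s) * (((r - s) ^ 2 + θ ^ 2 / 8) *
        Real.sqrt (4 * (r * s) / π ^ 2 + 1 / 2)) := by
  have hπ := Real.pi_pos
  have hπ3 : (3:ℝ) < π := Real.pi_gt_three
  have hπ4 : π < 4 := by have := Real.pi_lt_d2; linarith
  have hm0 : 0 ≤ min r s := le_min hr0 hs0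
  have hc20 : (0:ℝ) ≤ (r - s) ^ 2 + θ ^ 2 / 8 := by positivity
  have hQpos : (0:ℝ) < 4 * (r * s) / π ^ 2 + 1 / 2 := by positivity
  have hsQ0 : 0 < Real.sqrt (4 * (r * s) / π ^ 2 + 1 / 2) := Real.sqrt_pos.mpr hQpos
  have hd2eq' : r ^ 2 + s ^ 2 - 2 * (r * s) * Real.cos θ
      = (r - s) ^ 2 + 2 * (r * s) * (1 - Real.cos θ) := by ring
  rw [hd2eq']
  rcases le_or_gt (2 * (r * s) * (1 - Real.cos θ)) ((r - s) ^ 2) with hcase | hcase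
  · have h2 : (1:ℝ)/2 ≤ Real.sqrt (4 * (r * s) / π ^ 2 + 1 / 2) := by
      apply (Real.le_sqrt (by norm_num) hQpos.le).mpr
      have : (0:ℝ) ≤ 4 * (r * s) / π ^ 2 := by positivity
      nlinarith
    nlinarith [mul_le_mul_of_nonneg_left h2 hc20,
      mul_nonneg hm0 (mul_nonneg hc20 hsQ0.le)]
  · have hcos2 : 1 - Real.cos θ ≤ θ ^ 2 / 2 := by
      have := Real.one_sub_sq_div_two_le_cos (x := θ); linarith
    have hd2le : (r - s) ^ 2 + 2 * (r * s) * (1 - Real.cos θ)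
        ≤ 16 * (r * s) * ((r - s) ^ 2 + θ ^ 2 / 8) := by
      nlinarith [mul_le_mul_of_nonneg_left hcos2 (by positivity : (0:ℝ) ≤ 2 * (r * s)),
        mul_nonneg (mul_nonneg hr0 hs0) (sq_nonneg (r - s))]
    have hrs4 : (r - s) ^ 2 ≤ 4 * (r * s) := by
      have hc1 : 1 - Real.cos θ ≤ 2 := by
        have := Real.neg_one_le_cos θ; linarith
      nlinarith [mul_le_mul_of_nonneg_left hc1 (by positivity : (0:ℝ) ≤ 2 * (r * s))]
    have hsqrs : Real.sqrt (r * s) ≤ 3 * min r s := rs_min_bound hr0 hs0 hrs4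
    have hsQrs : Real.sqrt (r * s) / 2 ≤ Real.sqrt (4 * (r * s) / π ^ 2 + 1 / 2) := by
      rw [show Real.sqrt (r * s) / 2 = Real.sqrt ((r*s)/4) by
        rw [show (r*s)/4 = (r*s) * (1/2)^2 by ring, Real.sqrt_mul (mul_nonneg hr0 hs0),
          Real.sqrt_sq (by norm_num)]
        ring]
      apply Real.sqrt_le_sqrt
      have hπ16 : π ^ 2 ≤ 16 := by nlinarith
      have h1 : 4 * (r * s) / 16 ≤ 4 * (r * s) / π ^ 2 :=
        div_le_div_of_nonneg_left (by positivity) (by positivity) hπ16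
      linarith
    have e1 : 16 * (r * s) ≤ 96 * min r s * Real.sqrt (4 * (r * s) / π ^ 2 + 1 / 2) := by
      have t1 : Real.sqrt (r * s) * Real.sqrt (r * s) = r * s :=
        Real.mul_self_sqrt (by positivity)
      nlinarith [hsqrs, hsQrs, Real.sqrt_nonneg (r * s), hsQ0.le, hm0]
    have e2 : 16 * (r * s) * ((r - s) ^ 2 + θ ^ 2 / 8)
        ≤ 96 * min r s * Real.sqrt (4 * (r * s) / π ^ 2 + 1 / 2) * ((r - s) ^ 2 + θ ^ 2 / 8) :=
      mul_le_mul_of_nonneg_right e1 hc20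
    linarith [hd2le, e2, mul_nonneg hm0 (mul_nonneg hc20 hsQ0.le),
      mul_nonneg hc20 hsQ0.le]

set_option maxHeartbeats 1000000 in
lemma key_estimate {r s θ d2 : ℝ} (hr0 : 0 ≤ r) (hs0 : 0 ≤ s)
    (hθ0 : 0 ≤ θ) (hθ2 : θ ≤ 2 * π)
    (hd2 : d2 = r ^ 2 + s ^ 2 - 2 * (r * s) * Real.cos θ) (hd2pos : 0 < d2) :
    (∫ a in Set.Ioi (0:ℝ),
        1 / Real.sqrt (r ^ 2 + s ^ 2 - 2 * (r * s) * Real.cos (a - θ) + a ^ 2) ^ 3)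
      ≤ 300 * (1 + (1 + min r s) / d2) := by
  have hπ := Real.pi_pos
  have hπ3 : (3:ℝ) < π := Real.pi_gt_three
  set f := fun a : ℝ =>
    1 / Real.sqrt (r ^ 2 + s ^ 2 - 2 * (r * s) * Real.cos (a - θ) + a ^ 2) ^ 3 with hfdef
  have hgpos : ∀ a : ℝ, 0 < r ^ 2 + s ^ 2 - 2 * (r * s) * Real.cos (a - θ) + a ^ 2 := by
    intro a
    rcases eq_or_ne a 0 with rfl | h
    · have h := hd2pos; rw [hd2] at h
      simpa [zero_sub, Real.cos_neg] using h
    · have h2 : 0 < a ^ 2 := by rw [← sq_abs]; exact pow_pos (abs_pos.mpr h) 2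
      nlinarith [mul_le_mul_of_nonneg_left (Real.cos_le_one (a - θ))
        (by positivity : (0:ℝ) ≤ 2 * (r * s)), sq_nonneg (r - s)]
  have hfc : Continuous f := by
    rw [hfdef]
    apply Continuous.div continuous_const
    · exact (Real.continuous_sqrt.comp (by continuity)).pow 3
    · intro a
      have := Real.sqrt_pos.mpr (hgpos a)
      positivity
  have hf0 : ∀ a : ℝ, 0 ≤ f a := by
    intro a; rw [hfdef]; positivity
  have hA0 : 0 < θ + π := by linarith
  -- tail
  have hrint : IntegrableOn (fun a : ℝ => a ^ (-3 : ℝ)) (Set.Ioi (θ + π)) :=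
    integrableOn_Ioi_rpow_of_lt (by norm_num) hA0
  have hptail : ∀ a ∈ Set.Ioi (θ + π), f a ≤ a ^ (-3 : ℝ) := by
    intro a ha
    have ha0 : 0 < a := hA0.trans ha
    have h1 : a ≤ Real.sqrt (r ^ 2 + s ^ 2 - 2 * (r * s) * Real.cos (a - θ) + a ^ 2) := by
      rw [Real.le_sqrt ha0.le (hgpos a).le]
      nlinarith [mul_le_mul_of_nonneg_left (Real.cos_le_one (a - θ))
        (by positivity : (0:ℝ) ≤ 2 * (r * s)), sq_nonneg (r - s)]
    have h2 : a ^ 3 ≤ Real.sqrt (r ^ 2 + s ^ 2 - 2 * (r * s) * Real.cos (a - θ) + a ^ 2) ^ 3 :=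
      pow_le_pow_left₀ ha0.le h1 3
    have h3 : a ^ (-3 : ℝ) = 1 / a ^ 3 := by
      rw [show (-3 : ℝ) = -((3:ℕ):ℝ) by norm_num, Real.rpow_neg ha0.le,
        Real.rpow_natCast, one_div]
    rw [hfdef, h3]
    exact one_div_le_one_div_of_le (by positivity) h2
  have hint2 : IntegrableOn f (Set.Ioi (θ + π)) := by
    apply MeasureTheory.Integrable.mono hrint (hfc.aestronglyMeasurable.restrict)
    filter_upwards [ae_restrict_mem measurableSet_Ioi] with a ha
    have ha0 : 0 < a := hA0.trans ha
    rw [Real.norm_of_nonneg (hf0 a), Real.norm_of_nonneg (by positivity)]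
    exact hptail a ha
  have htail : (∫ a in Set.Ioi (θ + π), f a) ≤ 1 / 2 := by
    have h1 : (∫ a in Set.Ioi (θ + π), f a) ≤ ∫ a in Set.Ioi (θ + π), a ^ (-3 : ℝ) :=
      setIntegral_mono_on hint2 hrint measurableSet_Ioi hptail
    rw [integral_Ioi_rpow_of_lt (by norm_num) hA0] at h1
    rw [show (-3 + 1 : ℝ) = -2 by norm_num] at h1
    have h2 : (θ + π) ^ (-2 : ℝ) ≤ 1 :=
      Real.rpow_le_one_of_one_le_of_nonpos (by linarith) (by norm_num)
    have h3 : 0 ≤ (θ + π) ^ (-2 : ℝ) := Real.rpow_nonneg hA0.le _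
    calc (∫ a in Set.Ioi (θ + π), f a) ≤ -(θ + π) ^ (-2 : ℝ) / (-2) := h1
      _ = (θ + π) ^ (-2 : ℝ) / 2 := by ring
      _ ≤ 1 / 2 := by linarith
  have hint1 : IntegrableOn f (Set.Ioc 0 (θ + π)) := hfc.integrableOn_Ioc
  have hsplit : (∫ a in Set.Ioi (0:ℝ), f a)
      = (∫ a in Set.Ioc 0 (θ + π), f a) + ∫ a in Set.Ioi (θ + π), f a := by
    rw [← Set.Ioc_union_Ioi_eq_Ioi hA0.le]
    exact setIntegral_union (Set.Ioc_disjoint_Ioi le_rfl) measurableSet_Ioi hint1 hint2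
  have hIoc : (∫ a in Set.Ioc 0 (θ + π), f a) = ∫ a in (0:ℝ)..(θ + π), f a :=
    (intervalIntegral.integral_of_le hA0.le).symm
  have hadj : (∫ a in (0:ℝ)..(θ + π), f a)
      = (∫ a in (0:ℝ)..(θ/2), f a) + ∫ a in (θ/2)..(θ + π), f a :=
    (intervalIntegral.integral_add_adjacent_intervals
      (hfc.intervalIntegrable _ _) (hfc.intervalIntegrable _ _)).symm
  -- piece 1
  have hp1 : (∫ a in (0:ℝ)..(θ/2), f a) ≤ 8 / d2 := by
    have hmono : (∫ a in (0:ℝ)..(θ/2), f a)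
        ≤ ∫ a in (0:ℝ)..(θ/2), 1 / Real.sqrt (d2/4 + 1 * (a - 0) ^ 2) ^ 3 := by
      apply intervalIntegral.integral_mono_on (by linarith)
        (hfc.intervalIntegrable _ _)
        ((cont_kernel (by positivity) (by norm_num)).intervalIntegrable _ _)
      intro a ha
      obtain ⟨ha1, ha2⟩ := ha
      rw [hfdef]
      have hcosrw : Real.cos (a - θ) = Real.cos (θ - a) := by
        rw [show a - θ = -(θ - a) by ring, Real.cos_neg]
      have htri := trigA hθ0 hθ2 (by linarith : θ/2 ≤ θ - a) (by linarith : θ - a ≤ θ)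
      have hle : d2/4 + 1 * (a - 0) ^ 2
          ≤ r ^ 2 + s ^ 2 - 2 * (r * s) * Real.cos (a - θ) + a ^ 2 := by
        rw [hcosrw, hd2]
        nlinarith [sq_nonneg (r - s),
          mul_le_mul_of_nonneg_left htri (by positivity : (0:ℝ) ≤ r * s)]
      have hpos1 : 0 < Real.sqrt (d2/4 + 1 * (a - 0) ^ 2) :=
        Real.sqrt_pos.mpr (by positivity)
      apply one_div_le_one_div_of_le (by positivity)
      exact pow_le_pow_left₀ hpos1.le (Real.sqrt_le_sqrt hle) 3
    calc (∫ a in (0:ℝ)..(θ/2), f a)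
        ≤ ∫ a in (0:ℝ)..(θ/2), 1 / Real.sqrt (d2/4 + 1 * (a - 0) ^ 2) ^ 3 := hmono
      _ ≤ 2 / (d2/4 * Real.sqrt 1) := ftc_bound (by positivity) one_pos (by linarith)
      _ = 8 / d2 := by rw [Real.sqrt_one]; field_simp; ring
  -- piece 2
  have hQpos : (0:ℝ) < 4 * (r * s) / π ^ 2 + 1 / 2 := by positivity
  have hc2pos : (0:ℝ) < (r - s) ^ 2 + θ ^ 2 / 8 := by
    rcases eq_or_ne θ 0 with rfl | h
    · rw [Real.cos_zero] at hd2
      nlinarith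
    · have h2 : 0 < θ ^ 2 := by rw [← sq_abs]; exact pow_pos (abs_pos.mpr h) 2
      nlinarith [sq_nonneg (r - s)]
  have hp2 : (∫ a in (θ/2)..(θ + π), f a)
      ≤ 2 / (((r - s) ^ 2 + θ ^ 2 / 8) * Real.sqrt (4 * (r * s) / π ^ 2 + 1 / 2)) := by
    have hmono : (∫ a in (θ/2)..(θ + π), f a)
        ≤ ∫ a in (θ/2)..(θ + π), 1 / Real.sqrt (((r - s) ^ 2 + θ ^ 2 / 8)
            + (4 * (r * s) / π ^ 2 + 1 / 2) * (a - θ) ^ 2) ^ 3 := by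
      apply intervalIntegral.integral_mono_on (by linarith)
        (hfc.intervalIntegrable _ _)
        ((cont_kernel hc2pos hQpos.le).intervalIntegrable _ _)
      intro a ha
      obtain ⟨ha1, ha2⟩ := ha
      rw [hfdef]
      have habs : |a - θ| ≤ π := by
        rw [abs_le]; constructor <;> [linarith; linarith]
      have htri := trigB habs
      have hle : ((r - s) ^ 2 + θ ^ 2 / 8) + (4 * (r * s) / π ^ 2 + 1 / 2) * (a - θ) ^ 2
          ≤ r ^ 2 + s ^ 2 - 2 * (r * s) * Real.cos (a - θ) + a ^ 2 := by
        have hcurv := mul_le_mul_of_nonneg_left htri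
          (by positivity : (0:ℝ) ≤ 2 * (r * s))
        have hquad : θ ^ 2 / 8 + (a - θ) ^ 2 / 2 ≤ a ^ 2 := by
          nlinarith [mul_nonneg (by linarith : (0:ℝ) ≤ a - θ/2)
            (by linarith : (0:ℝ) ≤ a/2 + 5*θ/4)]
        have e1 : 2 * (r * s) * (2 / π ^ 2 * (a - θ) ^ 2)
            = 4 * (r * s) / π ^ 2 * (a - θ) ^ 2 := by
          field_simp; ring
        nlinarith [hcurv, hquad]
      have hpos1 : 0 < Real.sqrt (((r - s) ^ 2 + θ ^ 2 / 8)
          + (4 * (r * s) / π ^ 2 + 1 / 2) * (a - θ) ^ 2) :=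
        Real.sqrt_pos.mpr (by positivity)
      apply one_div_le_one_div_of_le (by positivity)
      exact pow_le_pow_left₀ hpos1.le (Real.sqrt_le_sqrt hle) 3
    calc (∫ a in (θ/2)..(θ + π), f a)
        ≤ ∫ a in (θ/2)..(θ + π), 1 / Real.sqrt (((r - s) ^ 2 + θ ^ 2 / 8)
            + (4 * (r * s) / π ^ 2 + 1 / 2) * (a - θ) ^ 2) ^ 3 := hmono
      _ ≤ 2 / (((r - s) ^ 2 + θ ^ 2 / 8) * Real.sqrt (4 * (r * s) / π ^ 2 + 1 / 2)) :=
          ftc_bound hc2pos hQpos (by linarith)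
  -- conclusion
  have hm0 : 0 ≤ min r s := le_min hr0 hs0
  have hsQ0 : 0 < Real.sqrt (4 * (r * s) / π ^ 2 + 1 / 2) := Real.sqrt_pos.mpr hQpos
  have harith : d2 ≤ 100 * (1 + min r s) *
      (((r - s) ^ 2 + θ ^ 2 / 8) * Real.sqrt (4 * (r * s) / π ^ 2 + 1 / 2)) := by
    rw [hd2]; exact arith_key hr0 hs0 hθ0
  have hmid : 2 / (((r - s) ^ 2 + θ ^ 2 / 8) * Real.sqrt (4 * (r * s) / π ^ 2 + 1 / 2))
      ≤ 200 * ((1 + min r s) / d2) := by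
    rw [show 200 * ((1 + min r s) / d2) = 200 * (1 + min r s) / d2 by ring,
      div_le_div_iff₀ (by positivity) hd2pos]
    nlinarith [harith]
  have ht1 : 1 / d2 ≤ (1 + min r s) / d2 := by gcongr <;> linarith
  have ht0 : 0 ≤ (1 + min r s) / d2 := by positivity
  calc (∫ a in Set.Ioi (0:ℝ), f a)
      = (∫ a in Set.Ioc 0 (θ + π), f a) + ∫ a in Set.Ioi (θ + π), f a := hsplit
    _ = ((∫ a in (0:ℝ)..(θ/2), f a) + ∫ a in (θ/2)..(θ + π), f a)
        + ∫ a in Set.Ioi (θ + π), f a := by rw [hIoc, hadj]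
    _ ≤ (8 / d2 + 2 / (((r - s) ^ 2 + θ ^ 2 / 8)
        * Real.sqrt (4 * (r * s) / π ^ 2 + 1 / 2))) + 1/2 := by
        have := add_le_add (add_le_add hp1 hp2) htail
        linarith
    _ ≤ 300 * (1 + (1 + min r s) / d2) := by
        have h8 : 8 / d2 = 8 * (1 / d2) := by ring
        rw [h8]
        nlinarith [hmid, ht0, ht1]

/-- the key kernel estimate
`∫₀^∞ (|x−R_a y|² + a²)^{−3/2} da ≤ C (1 + (1 + min(|x|,|y|))/|x−y|²)`. -/
theorem stmt_8 : ∃ C > (0:ℝ), ∀ x y : ℝ × ℝ, x ≠ y →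
    (∫ a in Set.Ioi (0:ℝ), 1 / Real.sqrt (vnorm (x - vrot a y) ^ 2 + a ^ 2) ^ 3)
      ≤ C * (1 + (1 + min (vnorm x) (vnorm y)) / vnorm (x - y) ^ 2) := by
  refine ⟨300, by norm_num, ?_⟩
  intro x y hxy
  obtain ⟨θ, hθ0, hθ2, hp, hq⟩ := polar x y
  have hr0 := vnorm_nonneg x
  have hs0 := vnorm_nonneg y
  have hD := dist_formula x y hp hq
  have hzne : x - y ≠ 0 := sub_ne_zero.mpr hxy
  have hdpos : 0 < vnorm (x - y) := vnorm_pos hzne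
  have hd2pos : 0 < vnorm (x - y) ^ 2 := by positivity
  have hd2 : vnorm (x - y) ^ 2
      = vnorm x ^ 2 + vnorm y ^ 2 - 2 * (vnorm x * vnorm y) * Real.cos θ := by
    have h0 := hD 0
    rw [vrot_zero] at h0
    rw [h0, show (0:ℝ) - θ = -θ by ring, Real.cos_neg]
  have hcong : (∫ a in Set.Ioi (0:ℝ), 1 / Real.sqrt (vnorm (x - vrot a y) ^ 2 + a ^ 2) ^ 3)
      = ∫ a in Set.Ioi (0:ℝ), 1 / Real.sqrt (vnorm x ^ 2 + vnorm y ^ 2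
          - 2 * (vnorm x * vnorm y) * Real.cos (a - θ) + a ^ 2) ^ 3 := by
    apply setIntegral_congr_fun measurableSet_Ioi
    intro a _
    simp only [hD a]
  rw [hcong]
  exact key_estimate hr0 hs0 hθ0 hθ2 hd2 hd2pos
end

section
/- For all x, y ∈ ℝ² with 0 < |x| ≤ |y|, the following hold: (i) |x − (|x|/|y|) y| ≤ |x − y|; (ii) |y| − |x| ≤ |x − y|; (iii) |x − y| ≤ |x − (|x|/|y|) y| + (|y| − |x|). In particular, |x − y| ≤ |x − (|x|/|y|) y| + (|y| − |x|) ≤ 2 |x − y|, i.e. the two quantities are comparable with universal constants. -/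
open MeasureTheory Real intervalIntegral RealInnerProductSpace

lemma vnorm_eq (x : ℝ × ℝ) : vnorm x = ‖(WithLp.equiv 2 (ℝ × ℝ)).symm x‖ := by
  rw [WithLp.prod_norm_eq_of_L2]
  simp [vnorm, Real.norm_eq_abs, sq_abs]

/-- for `0 < |x| ≤ |y|`, the quantity `|x − (|x|/|y|)y| + (|y| − |x|)`
is comparable to `|x − y|` with universal constants. -/
theorem stmt_11 (x y : ℝ × ℝ) (hx : 0 < vnorm x) (hxy : vnorm x ≤ vnorm y) :
    vnorm (x - (vnorm x / vnorm y) • y) ≤ vnorm (x - y) ∧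
    vnorm y - vnorm x ≤ vnorm (x - y) ∧
    vnorm (x - y) ≤ vnorm (x - (vnorm x / vnorm y) • y) + (vnorm y - vnorm x) ∧
    vnorm (x - (vnorm x / vnorm y) • y) + (vnorm y - vnorm x) ≤ 2 * vnorm (x - y) := by
  set X : WithLp 2 (ℝ × ℝ) := (WithLp.equiv 2 (ℝ × ℝ)).symm x with hX
  set Y : WithLp 2 (ℝ × ℝ) := (WithLp.equiv 2 (ℝ × ℝ)).symm y with hY
  have hsub : ∀ u v : ℝ × ℝ, (WithLp.equiv 2 (ℝ × ℝ)).symm (u - v)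
      = (WithLp.equiv 2 (ℝ × ℝ)).symm u - (WithLp.equiv 2 (ℝ × ℝ)).symm v := fun _ _ => rfl
  have hsmul : ∀ (c : ℝ) (u : ℝ × ℝ), (WithLp.equiv 2 (ℝ × ℝ)).symm (c • u)
      = c • (WithLp.equiv 2 (ℝ × ℝ)).symm u := fun _ _ => rfl
  have hnx : vnorm x = ‖X‖ := vnorm_eq x
  have hny : vnorm y = ‖Y‖ := vnorm_eq y
  have h1 : vnorm (x - (vnorm x / vnorm y) • y) = ‖X - (‖X‖ / ‖Y‖) • Y‖ := by
    rw [vnorm_eq, hsub, hsmul, hnx, hny]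
  have h2 : vnorm (x - y) = ‖X - Y‖ := by rw [vnorm_eq, hsub]
  rw [h1, h2, hnx, hny]
  have hX0 : (0:ℝ) < ‖X‖ := hnx ▸ hx
  have hXY : ‖X‖ ≤ ‖Y‖ := by rw [← hnx, ← hny]; exact hxy
  have hY0 : (0:ℝ) < ‖Y‖ := lt_of_lt_of_le hX0 hXY
  set t : ℝ := ‖X‖ / ‖Y‖ with ht
  have ht1 : t ≤ 1 := (div_le_one hY0).2 hXY
  have ht0 : 0 ≤ t := div_nonneg hX0.le hY0.le
  -- (i)
  have hi : ‖X - t • Y‖ ≤ ‖X - Y‖ := by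
    have hsq : ‖X - t • Y‖ ^ 2 ≤ ‖X - Y‖ ^ 2 := by
      rw [norm_sub_sq_real, norm_sub_sq_real, real_inner_smul_right, norm_smul,
        Real.norm_eq_abs, abs_of_nonneg ht0]
      have hcs : (inner ℝ X Y : ℝ) ≤ ‖X‖ * ‖Y‖ := real_inner_le_norm X Y
      have hab : ‖X‖ = t * ‖Y‖ := by rw [ht]; field_simp
      nlinarith [hcs, hab, ht1, ht0, hY0, mul_pos hY0 hY0,
        mul_nonneg (mul_nonneg (sub_nonneg.2 ht1) (sub_nonneg.2 ht1)) (mul_pos hY0 hY0).le]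
    nlinarith [hsq, norm_nonneg (X - t • Y), norm_nonneg (X - Y)]
  -- (ii)
  have hii : ‖Y‖ - ‖X‖ ≤ ‖X - Y‖ := by
    have h := norm_sub_norm_le Y X
    rwa [norm_sub_rev] at h
  -- (iii)
  have hiii : ‖X - Y‖ ≤ ‖X - t • Y‖ + (‖Y‖ - ‖X‖) := by
    have htri : ‖X - Y‖ ≤ ‖X - t • Y‖ + ‖t • Y - Y‖ := by
      have := norm_add_le (X - t • Y) (t • Y - Y)
      simpa using this
    have hnorm : ‖t • Y - Y‖ = ‖Y‖ - ‖X‖ := by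
      have : t • Y - Y = (t - 1) • Y := by rw [sub_smul, one_smul]
      rw [this, norm_smul, Real.norm_eq_abs, abs_of_nonpos (by linarith)]
      rw [ht]; field_simp; ring
    linarith
  exact ⟨hi, hii, hiii, by linarith⟩
end

section
/- For every K > 0 there exists C > 0 such that the following holds: let ε ∈ (0, 1/2), let w : ℝ² → ℝ be measurable with 0 ≤ w(x) ≤ K/ε² for almost every x and ∫_{ℝ²} w(x) dx ≤ 1, and let f : ℝ² → [0, ∞) be integrable. Then ∫_{ℝ²} ∫_{ℝ²} log(1/|x−y|) 1_{|x−y|≤1} f(x) w(y) dx dy ≤ C log(1/ε) ∫_{ℝ²} f(x) dx. -/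
open MeasureTheory Real intervalIntegral

open Set

namespace Stmt12

lemma vnorm_nonneg (z : ℝ × ℝ) : 0 ≤ vnorm z := Real.sqrt_nonneg _

lemma continuous_vnorm : Continuous vnorm :=
  ((continuous_fst.pow 2).add (continuous_snd.pow 2)).sqrt

lemma vnorm_polar (p : ℝ × ℝ) (hp : 0 ≤ p.1) : vnorm (polarCoord.symm p) = p.1 := by
  simp only [polarCoord_symm_apply, vnorm]
  have : (p.1 * Real.cos p.2) ^ 2 + (p.1 * Real.sin p.2) ^ 2 = p.1 ^ 2 := by
    have := Real.sin_sq_add_cos_sq p.2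
    nlinarith
  rw [this, Real.sqrt_sq hp]

lemma integrable_iff_polar (g : ℝ × ℝ → ℝ) :
    Integrable g ↔ IntegrableOn (fun p => p.1 • g (polarCoord.symm p)) polarCoord.target := by
  set B : ℝ × ℝ → ℝ × ℝ →L[ℝ] ℝ × ℝ := fun p =>
    LinearMap.toContinuousLinearMap (Matrix.toLin (Module.Basis.finTwoProd ℝ) (Module.Basis.finTwoProd ℝ)
      !![Real.cos p.2, -p.1 * Real.sin p.2; Real.sin p.2, p.1 * Real.cos p.2]) with hB
  have A : ∀ p ∈ polarCoord.target, HasFDerivWithinAt polarCoord.symm (B p) polarCoord.target p :=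
    fun p _ => (hasFDerivAt_polarCoord_symm p).hasFDerivWithinAt
  have B_det : ∀ p, (B p).det = p.1 := by
    intro p
    conv_rhs => rw [← one_mul p.1, ← Real.cos_sq_add_sin_sq p.2]
    simp only [hB, neg_mul, LinearMap.det_toContinuousLinearMap, LinearMap.det_toLin,
      Matrix.det_fin_two_of, sub_neg_eq_add]
    ring
  have hinj : Set.InjOn polarCoord.symm polarCoord.target := polarCoord.symm.injOn
  have h1 := integrableOn_image_iff_integrableOn_abs_det_fderiv_smul volume
    polarCoord.open_target.measurableSet A hinj g
  rw [polarCoord.symm_image_target_eq_source] at h1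
  have h2 : IntegrableOn g polarCoord.source ↔ Integrable g := by
    rw [IntegrableOn, Measure.restrict_congr_set polarCoord_source_ae_eq_univ,
      Measure.restrict_univ]
  rw [← h2, h1]
  exact integrableOn_congr_fun
    (fun p hp => by rw [B_det, abs_of_pos (mem_Ioi.1 hp.1)])
    polarCoord.open_target.measurableSet

/-- the singular part of the kernel -/
noncomputable def hfun (ε : ℝ) (z : ℝ × ℝ) : ℝ :=
  if vnorm z ≤ ε then Real.log (ε / vnorm z) else 0

lemma measurable_hfun (ε : ℝ) : Measurable (hfun ε) :=
  Measurable.ite (measurableSet_le continuous_vnorm.measurable measurable_const)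
    (Real.measurable_log.comp (measurable_const.div continuous_vnorm.measurable))
    measurable_const

lemma hfun_nonneg {ε : ℝ} (z : ℝ × ℝ) : 0 ≤ hfun ε z := by
  unfold hfun
  split_ifs with h
  · rcases (vnorm_nonneg z).eq_or_lt with h0 | h0
    · rw [← h0, div_zero, Real.log_zero]
    · exact Real.log_nonneg ((one_le_div h0).2 h)
  · exact le_refl 0

lemma key {ε : ℝ} (hε : 0 < ε) :
    Integrable (hfun ε) ∧ (∫ z : ℝ × ℝ, hfun ε z) ≤ 2 * π * ε ^ 2 := by
  set F : ℝ × ℝ → ℝ := fun p => p.1 • hfun ε (polarCoord.symm p) with hF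
  have hFmeas : Measurable F := by
    have hsymm : Measurable (fun p : ℝ × ℝ => polarCoord.symm p) := by
      have : (fun p : ℝ × ℝ => polarCoord.symm p)
          = fun p : ℝ × ℝ => (p.1 * Real.cos p.2, p.1 * Real.sin p.2) := by
        funext p; exact polarCoord_symm_apply p
      rw [this]
      exact ((measurable_fst.mul (Real.measurable_cos.comp measurable_snd)).prodMk
        (measurable_fst.mul (Real.measurable_sin.comp measurable_snd)))
    exact measurable_fst.smul ((measurable_hfun ε).comp hsymm)
  set s1 : Set (ℝ × ℝ) := Ioc 0 ε ×ˢ Ioo (-π) π with hs1def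
  set s2 : Set (ℝ × ℝ) := Ioi ε ×ˢ Ioo (-π) π with hs2def
  have hs1 : MeasurableSet s1 := measurableSet_Ioc.prod measurableSet_Ioo
  have hs2 : MeasurableSet s2 := measurableSet_Ioi.prod measurableSet_Ioo
  have htarget : polarCoord.target = s1 ∪ s2 := by
    rw [polarCoord_target, hs1def, hs2def, ← Set.union_prod, Set.Ioc_union_Ioi_eq_Ioi hε.le]
  have hdisj : Disjoint s1 s2 :=
    Set.disjoint_prod.2 (Or.inl (Set.Ioc_disjoint_Ioi le_rfl))
  have hF2 : EqOn F 0 s2 := by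
    intro p hp
    have hp1 : ε < p.1 := mem_Ioi.1 hp.1
    have : ¬ vnorm (polarCoord.symm p) ≤ ε := by
      rw [vnorm_polar p (le_of_lt (hε.trans hp1))]; linarith
    simp only [hF, hfun, if_neg this, smul_zero, Pi.zero_apply]
  have hint2 : IntegrableOn F s2 := (integrableOn_congr_fun hF2 hs2).2 (integrableOn_zero)
  have hvol : volume s1 = ENNReal.ofReal ε * ENNReal.ofReal (2 * π) := by
    rw [hs1def, Measure.volume_eq_prod, Measure.prod_prod, Real.volume_Ioc, Real.volume_Ioo]
    norm_num
    ring_nf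
    rw [ENNReal.ofReal_mul (by positivity), ENNReal.ofReal_ofNat]
    ring
  have hvolne : volume s1 ≠ ⊤ := by
    rw [hvol]
    exact ENNReal.mul_ne_top ENNReal.ofReal_ne_top ENNReal.ofReal_ne_top
  have hFle : ∀ p ∈ s1, 0 ≤ F p ∧ F p ≤ ε := by
    rintro p hp
    have hp1 : p.1 ∈ Ioc 0 ε := hp.1
    have hv : vnorm (polarCoord.symm p) = p.1 := vnorm_polar p hp1.1.le
    have hcond : vnorm (polarCoord.symm p) ≤ ε := by rw [hv]; exact hp1.2
    have hFp : F p = p.1 * Real.log (ε / p.1) := by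
      simp only [hF, hfun, hv, if_pos hp1.2, smul_eq_mul]
    constructor
    · rw [hFp]
      exact mul_nonneg hp1.1.le (Real.log_nonneg ((one_le_div hp1.1).2 hp1.2))
    · rw [hFp]
      have hdiv : 0 < ε / p.1 := div_pos hε hp1.1
      have := Real.log_le_sub_one_of_pos hdiv
      have h2 : p.1 * Real.log (ε / p.1) ≤ p.1 * (ε / p.1) := by
        have : Real.log (ε / p.1) ≤ ε / p.1 := by linarith
        exact mul_le_mul_of_nonneg_left this hp1.1.le
      rwa [mul_div_cancel₀ _ hp1.1.ne'] at h2
  have hint1 : IntegrableOn F s1 := by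
    apply Measure.integrableOn_of_bounded hvolne hFmeas.aestronglyMeasurable
    filter_upwards [ae_restrict_mem hs1] with p hp
    rw [Real.norm_eq_abs, abs_of_nonneg (hFle p hp).1]
    exact (hFle p hp).2
  have hintF : IntegrableOn F polarCoord.target := by
    rw [htarget]
    exact hint1.union hint2
  have hInt : Integrable (hfun ε) := (integrable_iff_polar _).2 hintF
  refine ⟨hInt, ?_⟩
  have heq : (∫ z : ℝ × ℝ, hfun ε z) = ∫ p in polarCoord.target, F p :=
    (integral_comp_polarCoord_symm (hfun ε)).symm
  rw [heq, htarget, setIntegral_union hdisj hs2 hint1 hint2]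
  have h0 : ∫ p in s2, F p = 0 := by
    rw [setIntegral_congr_fun hs2 hF2]
    simp
  rw [h0, add_zero]
  have hle : ∫ p in s1, F p ≤ ∫ _ in s1, ε :=
    setIntegral_mono_on hint1 (integrableOn_const hvolne) hs1
      fun p hp => (hFle p hp).2
  have hconst : (∫ _ in s1, ε : ℝ) = 2 * π * ε ^ 2 := by
    rw [setIntegral_const, measureReal_def, hvol, ENNReal.toReal_mul, ENNReal.toReal_ofReal hε.le,
      ENNReal.toReal_ofReal (by positivity), smul_eq_mul]
    ring
  linarith [hle, hconst.le]

lemma k_nonneg (z : ℝ × ℝ) :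
    0 ≤ (if vnorm z ≤ 1 then Real.log (1 / vnorm z) else 0) := by
  split_ifs with h
  · rcases (vnorm_nonneg z).eq_or_lt with h0 | h0
    · rw [← h0, div_zero, Real.log_zero]
    · exact Real.log_nonneg ((one_le_div h0).2 h)
  · exact le_refl 0

lemma k_le {ε : ℝ} (hε0 : 0 < ε) (hε1 : ε < 1) (z : ℝ × ℝ) :
    (if vnorm z ≤ 1 then Real.log (1 / vnorm z) else 0)
      ≤ Real.log (1 / ε) + hfun ε z := by
  have hlog : 0 < Real.log (1 / ε) := Real.log_pos (one_lt_one_div hε0 hε1)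
  by_cases h1 : vnorm z ≤ 1
  · rw [if_pos h1]
    by_cases h2 : vnorm z ≤ ε
    · rw [hfun, if_pos h2]
      rcases (vnorm_nonneg z).eq_or_lt with h0 | h0
      · rw [← h0, div_zero, div_zero, Real.log_zero]
        linarith
      · have heq : (1 : ℝ) / vnorm z = (1 / ε) * (ε / vnorm z) := by
          field_simp
        rw [heq, Real.log_mul (by positivity) (ne_of_gt (div_pos hε0 h0))]
    · rw [hfun, if_neg h2, add_zero]
      have hv : ε < vnorm z := lt_of_not_ge h2
      have : (1 : ℝ) / vnorm z ≤ 1 / ε := one_div_le_one_div_of_le hε0 hv.le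
      have hv0 : 0 < vnorm z := hε0.trans hv
      exact Real.log_le_log (by positivity) this
  · rw [if_neg h1]
    exact add_nonneg hlog.le (hfun_nonneg z)

end Stmt12

/-- the truncated logarithmic interaction of an integrable
nonnegative `f` with a vorticity `w` of unit mass bounded by `K/ε²` is at most
`C log(1/ε) ∫ f`. -/
theorem stmt_12 : ∀ K > (0:ℝ), ∃ C > (0:ℝ), ∀ ε : ℝ, ε ∈ Set.Ioo (0:ℝ) (1/2) →
    ∀ w : ℝ × ℝ → ℝ, Measurable w →
    (∀ᵐ x : ℝ × ℝ, 0 ≤ w x ∧ w x ≤ K / ε ^ 2) →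
    Integrable w → (∫ x : ℝ × ℝ, w x) ≤ 1 →
    ∀ f : ℝ × ℝ → ℝ, Integrable f → (∀ x, 0 ≤ f x) →
    (∫ x : ℝ × ℝ, ∫ y : ℝ × ℝ,
        (if vnorm (x - y) ≤ 1 then Real.log (1 / vnorm (x - y)) else 0) * f x * w y)
      ≤ C * Real.log (1 / ε) * ∫ x : ℝ × ℝ, f x := by
  intro K hK
  refine ⟨1 + 10 * K, by positivity, ?_⟩
  intro ε hε w hwmeas hwae hwint hwmass f hfint hfpos
  obtain ⟨hε0, hε12⟩ := hε
  have hε1 : ε < 1 := hε12.trans (by norm_num)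
  obtain ⟨hIh, hJ⟩ := Stmt12.key hε0
  have hlog2 : Real.log 2 ≤ Real.log (1 / ε) :=
    Real.log_le_log (by norm_num) ((le_div_iff₀ hε0).2 (by linarith))
  have hlogpos : 0 < Real.log (1 / ε) :=
    lt_of_lt_of_le (Real.log_pos one_lt_two) hlog2
  set k : ℝ × ℝ → ℝ := fun z =>
    if vnorm z ≤ 1 then Real.log (1 / vnorm z) else 0 with hkdef
  -- the inner integral bound
  have inner : ∀ x : ℝ × ℝ,
      (∫ y : ℝ × ℝ, k (x - y) * w y) ≤ (1 + 10 * K) * Real.log (1 / ε) := by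
    intro x
    have hcomp : Integrable (fun y : ℝ × ℝ => Stmt12.hfun ε (x - y)) :=
      hIh.comp_sub_left x
    have hDint : Integrable (fun y : ℝ × ℝ =>
        Real.log (1 / ε) * w y + (K / ε ^ 2) * Stmt12.hfun ε (x - y)) :=
      (hwint.const_mul _).add (hcomp.const_mul _)
    have hnn : 0 ≤ᵐ[volume] fun y : ℝ × ℝ => k (x - y) * w y := by
      filter_upwards [hwae] with y hy
      exact mul_nonneg (Stmt12.k_nonneg (x - y)) hy.1
    have hle : (fun y : ℝ × ℝ => k (x - y) * w y) ≤ᵐ[volume] fun y =>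
        Real.log (1 / ε) * w y + (K / ε ^ 2) * Stmt12.hfun ε (x - y) := by
      filter_upwards [hwae] with y hy
      have hk := Stmt12.k_le hε0 hε1 (x - y)
      have hh := Stmt12.hfun_nonneg (ε := ε) (x - y)
      have h1 : k (x - y) * w y ≤ (Real.log (1 / ε) + Stmt12.hfun ε (x - y)) * w y :=
        mul_le_mul_of_nonneg_right hk hy.1
      have h2 : Stmt12.hfun ε (x - y) * w y ≤ Stmt12.hfun ε (x - y) * (K / ε ^ 2) :=
        mul_le_mul_of_nonneg_left hy.2 hh
      nlinarith
    have hIle := integral_mono_of_nonneg hnn hDint hle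
    rw [integral_add (hwint.const_mul _) (hcomp.const_mul _), MeasureTheory.integral_const_mul,
      MeasureTheory.integral_const_mul, integral_sub_left_eq_self (Stmt12.hfun ε) volume x] at hIle
    have hb1 : Real.log (1 / ε) * (∫ y : ℝ × ℝ, w y) ≤ Real.log (1 / ε) * 1 :=
      mul_le_mul_of_nonneg_left hwmass hlogpos.le
    have hb2 : (K / ε ^ 2) * (∫ z : ℝ × ℝ, Stmt12.hfun ε z)
        ≤ (K / ε ^ 2) * (2 * π * ε ^ 2) :=
      mul_le_mul_of_nonneg_left hJ (by positivity)
    have hb2' : (K / ε ^ 2) * (2 * π * ε ^ 2) = 2 * π * K := by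
      field_simp
    have hpi : π < 3.15 := Real.pi_lt_d2
    have hl2 : (0.6931471803 : ℝ) < Real.log 2 := Real.log_two_gt_d9
    have hfinal : Real.log (1 / ε) + 2 * π * K ≤ (1 + 10 * K) * Real.log (1 / ε) := by
      nlinarith [mul_le_mul_of_nonneg_left hlog2 (by positivity : (0:ℝ) ≤ 10 * K)]
    calc (∫ y : ℝ × ℝ, k (x - y) * w y)
        ≤ Real.log (1 / ε) * (∫ y : ℝ × ℝ, w y)
          + (K / ε ^ 2) * (∫ z : ℝ × ℝ, Stmt12.hfun ε z) := hIle
      _ ≤ Real.log (1 / ε) * 1 + 2 * π * K := by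
          rw [← hb2']; exact add_le_add hb1 hb2
      _ ≤ (1 + 10 * K) * Real.log (1 / ε) := by rw [mul_one]; exact hfinal
  -- assembling the outer integral
  have outer_nn : ∀ x : ℝ × ℝ, 0 ≤ ∫ y : ℝ × ℝ, k (x - y) * f x * w y := by
    intro x
    apply MeasureTheory.integral_nonneg_of_ae
    filter_upwards [hwae] with y hy
    exact mul_nonneg (mul_nonneg (Stmt12.k_nonneg (x - y)) (hfpos x)) hy.1
  have rearrange : ∀ x : ℝ × ℝ,
      (∫ y : ℝ × ℝ, k (x - y) * f x * w y) = f x * ∫ y : ℝ × ℝ, k (x - y) * w y := by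
    intro x
    rw [← MeasureTheory.integral_const_mul]
    congr 1
    funext y
    ring
  have hmono := integral_mono_of_nonneg (ae_of_all _ outer_nn)
    (hfint.const_mul ((1 + 10 * K) * Real.log (1 / ε)))
    (ae_of_all _ (fun x => by
      dsimp only
      rw [rearrange x]
      calc f x * (∫ y : ℝ × ℝ, k (x - y) * w y)
          ≤ f x * ((1 + 10 * K) * Real.log (1 / ε)) :=
            mul_le_mul_of_nonneg_left (inner x) (hfpos x)
        _ = (1 + 10 * K) * Real.log (1 / ε) * f x := by ring))
  rw [MeasureTheory.integral_const_mul] at hmono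
  exact hmono
end

section
/- For every K > 0 there exists C > 0 such that the following holds: let ε ∈ (0, 1/2) and let w : ℝ² → ℝ be measurable with 0 ≤ w(x) ≤ K/ε² for almost every x and ∫_{ℝ²} w(x) dx = 1. If L > 0, x ∈ ℝ² satisfies Gw(x) ≥ log(1/ε) − L, and R satisfies 1 < R ≤ 1/ε, then ∫_{|x−y| ≥ Rε} w(y) dy ≤ (C + L) / log R. -/
open MeasureTheory Real intervalIntegral

lemma continuous_vnorm : Continuous vnorm :=
  ((continuous_fst.pow 2).add (continuous_snd.pow 2)).sqrt

lemma abs_fst_le_vnorm (z : ℝ × ℝ) : |z.1| ≤ vnorm z := by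
  rw [← Real.sqrt_sq_eq_abs]
  exact Real.sqrt_le_sqrt (le_add_of_nonneg_right (sq_nonneg _))

lemma abs_snd_le_vnorm (z : ℝ × ℝ) : |z.2| ≤ vnorm z := by
  rw [← Real.sqrt_sq_eq_abs]
  exact Real.sqrt_le_sqrt (le_add_of_nonneg_left (sq_nonneg _))

lemma vnorm_polar {r : ℝ} (θ : ℝ) (hr : 0 ≤ r) : vnorm (polarCoord.symm (r, θ)) = r := by
  rw [polarCoord_symm_apply]
  simp only [vnorm]
  have : (r * Real.cos θ) ^ 2 + (r * Real.sin θ) ^ 2 = r ^ 2 := by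
    have := Real.sin_sq_add_cos_sq θ; nlinarith
  rw [this, Real.sqrt_sq hr]

lemma log_le_two_sqrt {x : ℝ} (hx : 0 < x) : Real.log x ≤ 2 * Real.sqrt x := by
  have h1 : Real.log (Real.sqrt x) = Real.log x / 2 := Real.log_sqrt hx.le
  have h2 : Real.log (Real.sqrt x) ≤ Real.sqrt x - 1 :=
    Real.log_le_sub_one_of_pos (Real.sqrt_pos.2 hx)
  nlinarith [Real.sqrt_nonneg x]

noncomputable def gker (ε : ℝ) (z : ℝ × ℝ) : ℝ :=
  if vnorm z < ε then Real.log (ε / vnorm z) else 0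

lemma gker_nonneg {ε : ℝ} (z : ℝ × ℝ) : 0 ≤ gker ε z := by
  unfold gker
  split
  · rcases eq_or_lt_of_le (vnorm_nonneg z) with h | h
    · rw [← h, div_zero, Real.log_zero]
    · exact Real.log_nonneg ((one_le_div h).2 (by linarith [‹vnorm z < ε›]))
  · exact le_refl _

lemma gker_meas (ε : ℝ) : Measurable (gker ε) := by
  unfold gker
  exact Measurable.ite (continuous_vnorm.measurable measurableSet_Iio)
    (Real.measurable_log.comp (measurable_const.div continuous_vnorm.measurable))
    measurable_const

lemma gker_integrable {ε : ℝ} (hε : 0 < ε) : Integrable (gker ε) := by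
  set u : ℝ → ℝ := (Set.Ioo (0:ℝ) ε).indicator (fun r => 2 * Real.sqrt ε * r ^ (-(1/2) : ℝ))
    with hu_def
  have hu : Integrable u := by
    rw [hu_def, integrable_indicator_iff measurableSet_Ioo]
    exact (((integrableOn_Ioo_rpow_iff hε).2 (by norm_num)).const_mul _)
  have hu0 : ∀ r, 0 ≤ u r := by
    intro r
    apply Set.indicator_nonneg
    intro s hs
    exact mul_nonneg (by positivity) (Real.rpow_nonneg hs.1.le _)
  set v : ℝ → ℝ := (Set.Ioo (-ε) ε).indicator (fun _ => (1:ℝ)) with hv_def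
  have hv : Integrable v := by
    rw [hv_def, integrable_indicator_iff measurableSet_Ioo]
    exact integrableOn_const measure_Ioo_lt_top.ne
  have hv0 : ∀ s, 0 ≤ v s := fun s => Set.indicator_nonneg (fun _ _ => zero_le_one) s
  set Φ : ℝ × ℝ → ℝ := fun z => (u z.1 + u (-z.1)) * v z.2 with hΦ_def
  have hΦ : Integrable Φ := by
    rw [hΦ_def, Measure.volume_eq_prod]
    exact (hu.add hu.comp_neg).mul_prod hv
  have hΦ0 : ∀ z, 0 ≤ Φ z := fun z => mul_nonneg (add_nonneg (hu0 _) (hu0 _)) (hv0 _)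
  have hnull : ∀ᵐ z : ℝ × ℝ, z.1 ≠ 0 := by
    rw [ae_iff]
    have : {z : ℝ × ℝ | ¬ z.1 ≠ 0} = ({0} : Set ℝ) ×ˢ (Set.univ : Set ℝ) := by
      ext z
      simp only [Set.mem_setOf_eq, not_not, Set.mem_prod, Set.mem_singleton_iff, Set.mem_univ,
        and_true]
    rw [this, Measure.volume_eq_prod, Measure.prod_prod]
    simp
  refine hΦ.mono' (gker_meas ε).aestronglyMeasurable ?_
  filter_upwards [hnull] with z hz1
  rw [Real.norm_eq_abs, abs_of_nonneg (gker_nonneg z)]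
  unfold gker
  split
  · rename_i ht
    have h1 : (0:ℝ) < |z.1| := abs_pos.2 hz1
    have h2 : |z.1| ≤ vnorm z := abs_fst_le_vnorm z
    have ht0 : 0 < vnorm z := lt_of_lt_of_le h1 h2
    have hlog : Real.log (ε / vnorm z) ≤ Real.log (ε / |z.1|) := by
      apply Real.log_le_log (by positivity)
      exact div_le_div_of_nonneg_left hε.le h1 h2
    have hsq : Real.log (ε / |z.1|) ≤ 2 * Real.sqrt ε * |z.1| ^ (-(1/2) : ℝ) := by
      have h3 := log_le_two_sqrt (x := ε / |z.1|) (by positivity)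
      have hs : Real.sqrt (ε / |z.1|) = Real.sqrt ε * |z.1| ^ (-(1/2) : ℝ) := by
        rw [Real.sqrt_div hε.le, Real.rpow_neg (abs_nonneg _), ← Real.sqrt_eq_rpow,
          div_eq_mul_inv]
      rw [hs] at h3
      linarith
    have hzε : |z.1| < ε := lt_of_le_of_lt h2 ht
    have hz2 : z.2 ∈ Set.Ioo (-ε) ε := by
      rw [Set.mem_Ioo, ← abs_lt]
      exact lt_of_le_of_lt (abs_snd_le_vnorm z) ht
    have hv1 : v z.2 = 1 := by rw [hv_def]; exact Set.indicator_of_mem hz2 _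
    have huval : u z.1 + u (-z.1) = 2 * Real.sqrt ε * |z.1| ^ (-(1/2) : ℝ) := by
      rcases lt_or_gt_of_ne hz1 with hneg | hpos
      · have e1 : u z.1 = 0 := by
          rw [hu_def]
          exact Set.indicator_of_notMem (by rw [Set.mem_Ioo]; push_neg; intro h; linarith) _
        have e2 : u (-z.1) = 2 * Real.sqrt ε * (-z.1) ^ (-(1/2) : ℝ) := by
          rw [hu_def]
          refine Set.indicator_of_mem ?_ _
          rw [Set.mem_Ioo]
          refine ⟨by linarith, ?_⟩
          rwa [abs_of_neg hneg] at hzε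
        rw [e1, e2, zero_add, abs_of_neg hneg]
      · have e1 : u z.1 = 2 * Real.sqrt ε * z.1 ^ (-(1/2) : ℝ) := by
          rw [hu_def]
          refine Set.indicator_of_mem ?_ _
          rw [Set.mem_Ioo]
          exact ⟨hpos, by rwa [abs_of_pos hpos] at hzε⟩
        have e2 : u (-z.1) = 0 := by
          rw [hu_def]
          exact Set.indicator_of_notMem (by rw [Set.mem_Ioo]; push_neg; intro h; linarith) _
        rw [e1, e2, add_zero, abs_of_pos hpos]
    have : Φ z = 2 * Real.sqrt ε * |z.1| ^ (-(1/2) : ℝ) := by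
      calc Φ z = (u z.1 + u (-z.1)) * v z.2 := rfl
      _ = 2 * Real.sqrt ε * |z.1| ^ (-(1/2) : ℝ) := by rw [hv1, huval, mul_one]
    rw [this]
    exact le_trans hlog hsq
  · exact hΦ0 z

lemma gker_integral_le {ε : ℝ} (hε : 0 < ε) : (∫ z : ℝ × ℝ, gker ε z) ≤ 2 * π * ε ^ 2 := by
  rw [← integral_comp_polarCoord_symm]
  set φ : ℝ → ℝ := fun r => if r < ε then r * Real.log (ε / r) else 0 with hφ_def
  have htgt : MeasurableSet polarCoord.target := by
    rw [polarCoord_target]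
    exact measurableSet_Ioi.prod measurableSet_Ioo
  have hcongr : ∀ p ∈ polarCoord.target, p.1 • gker ε (polarCoord.symm p) = φ p.1 * 1 := by
    rintro ⟨r, θ⟩ hp
    rw [polarCoord_target, Set.mem_prod] at hp
    have hr : (0:ℝ) < r := hp.1
    have : gker ε (polarCoord.symm (r, θ)) = if r < ε then Real.log (ε / r) else 0 := by
      unfold gker
      rw [vnorm_polar θ hr.le]
    rw [this]
    simp only [smul_eq_mul, hφ_def, mul_ite, mul_zero, mul_one]
  rw [setIntegral_congr_fun htgt hcongr]
  rw [polarCoord_target, Measure.volume_eq_prod]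
  have hprod := MeasureTheory.setIntegral_prod_mul (μ := (volume : Measure ℝ))
    (ν := (volume : Measure ℝ)) φ (fun _ => (1:ℝ)) (Set.Ioi 0) (Set.Ioo (-π) π)
  simp only [mul_one] at hprod ⊢
  rw [hprod]
  have h2 : (∫ θ in Set.Ioo (-π) π, (1:ℝ)) = 2 * π := by
    rw [setIntegral_const, Real.volume_real_Ioo, smul_eq_mul, mul_one,
      max_eq_left (by linarith [pi_pos])]
    ring
  rw [h2]
  have hφ_meas : Measurable φ := by
    rw [hφ_def]
    exact Measurable.ite measurableSet_Iio
      (measurable_id.mul (Real.measurable_log.comp (measurable_const.div measurable_id)))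
      measurable_const
  set χ : ℝ → ℝ := (Set.Ioo (0:ℝ) ε).indicator (fun _ => ε) with hχ_def
  have hχ : Integrable χ := by
    rw [hχ_def, integrable_indicator_iff measurableSet_Ioo]
    exact integrableOn_const measure_Ioo_lt_top.ne
  have hle : ∀ r ∈ Set.Ioi (0:ℝ), φ r ≤ χ r := by
    intro r hr
    rw [Set.mem_Ioi] at hr
    by_cases h : r < ε
    · have hχr : χ r = ε := by rw [hχ_def]; exact Set.indicator_of_mem (Set.mem_Ioo.2 ⟨hr, h⟩) _
      have : Real.log (ε / r) ≤ ε / r - 1 := Real.log_le_sub_one_of_pos (by positivity)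
      have h4 : r * Real.log (ε / r) ≤ r * (ε / r - 1) :=
        mul_le_mul_of_nonneg_left this hr.le
      have h5 : r * (ε / r - 1) = ε - r := by field_simp
      rw [hφ_def]
      simp only [if_pos h]
      rw [hχr]
      linarith
    · have hχr : χ r = 0 := by
        rw [hχ_def]
        exact Set.indicator_of_notMem (by rw [Set.mem_Ioo]; push_neg; intro _; linarith) _
      rw [hφ_def]
      simp only [if_neg h]
      rw [hχr]
  have hφ0 : ∀ r ∈ Set.Ioi (0:ℝ), 0 ≤ φ r := by
    intro r hr
    rw [Set.mem_Ioi] at hr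
    by_cases h : r < ε
    · have h1 : (1:ℝ) ≤ ε / r := (one_le_div hr).2 h.le
      rw [hφ_def]
      simp only [if_pos h]
      exact mul_nonneg hr.le (Real.log_nonneg h1)
    · rw [hφ_def]
      simp only [if_neg h]
      exact le_refl _
  have hφint : IntegrableOn φ (Set.Ioi (0:ℝ)) := by
    refine (hχ.integrableOn).mono' hφ_meas.aestronglyMeasurable ?_
    rw [ae_restrict_iff' measurableSet_Ioi]
    refine ae_of_all _ (fun r hr => ?_)
    rw [Real.norm_eq_abs, abs_of_nonneg (hφ0 r hr)]
    exact hle r hr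
  have hmono : (∫ r in Set.Ioi (0:ℝ), φ r) ≤ ∫ r in Set.Ioi (0:ℝ), χ r :=
    setIntegral_mono_on hφint hχ.integrableOn measurableSet_Ioi hle
  have hχval : (∫ r in Set.Ioi (0:ℝ), χ r) = ε * ε := by
    rw [hχ_def, setIntegral_indicator measurableSet_Ioo,
      Set.inter_eq_self_of_subset_right Set.Ioo_subset_Ioi_self, setIntegral_const,
      Real.volume_real_Ioo, smul_eq_mul, max_eq_left (by linarith), sub_zero]
  have : (∫ r in Set.Ioi (0:ℝ), φ r) ≤ ε * ε := by rw [← hχval]; exact hmono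
  calc (∫ r in Set.Ioi (0:ℝ), φ r) * (2 * π) ≤ (ε * ε) * (2 * π) :=
        mul_le_mul_of_nonneg_right this (by positivity)
    _ = 2 * π * ε ^ 2 := by ring

lemma ker_nonneg {t : ℝ} (ht : 0 ≤ t) : 0 ≤ (if t ≤ 1 then Real.log (1/t) else 0) := by
  split
  · rcases eq_or_lt_of_le ht with h | h
    · rw [← h, div_zero, Real.log_zero]
    · refine Real.log_nonneg ?_
      rw [le_div_iff₀ h, one_mul]
      assumption
  · exact le_refl _

lemma ker_le {ε R t : ℝ} (hε0 : 0 < ε) (hε1 : ε < 1) (hR1 : 1 < R) (hRε1 : R * ε ≤ 1)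
    (ht : 0 ≤ t) :
    (if t ≤ 1 then Real.log (1/t) else 0) ≤
      (Real.log (1/ε) - (if R * ε ≤ t then Real.log R else 0)) +
        (if t < ε then Real.log (ε / t) else 0) := by
  have hR0 : 0 < R := lt_trans one_pos hR1
  have hRε0 : 0 < R * ε := by positivity
  have hεRε : ε ≤ R * ε := by nlinarith
  by_cases h1 : t < ε
  · have hts : ¬ (R * ε ≤ t) := by linarith
    rw [if_neg hts, if_pos h1, if_pos (by linarith : t ≤ 1), sub_zero]
    rcases eq_or_lt_of_le ht with h0 | h0
    · rw [← h0, div_zero, Real.log_zero, div_zero, Real.log_zero, add_zero]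
      refine Real.log_nonneg ?_
      rw [le_div_iff₀ hε0, one_mul]
      linarith
    · have : Real.log (1/t) = Real.log (1/ε) + Real.log (ε/t) := by
        rw [one_div, Real.log_inv, one_div, Real.log_inv,
          Real.log_div (ne_of_gt hε0) (ne_of_gt h0)]
        ring
      rw [this]
  · by_cases h2 : R * ε ≤ t
    · rw [if_pos h2, if_neg h1, add_zero]
      have hkey : Real.log (1/ε) - Real.log R = Real.log (1/(R*ε)) := by
        rw [one_div, Real.log_inv, one_div, Real.log_inv,
          Real.log_mul (ne_of_gt hR0) (ne_of_gt hε0)]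
        ring
      rw [hkey]
      by_cases h3 : t ≤ 1
      · rw [if_pos h3]
        have ht0 : 0 < t := lt_of_lt_of_le hRε0 h2
        exact Real.log_le_log (by positivity) (one_div_le_one_div_of_le hRε0 h2)
      · rw [if_neg h3]
        refine Real.log_nonneg ?_
        rw [le_div_iff₀ hRε0, one_mul]
        linarith
    · rw [if_neg h2, if_neg h1, sub_zero, add_zero]
      push_neg at h1
      by_cases h3 : t ≤ 1
      · rw [if_pos h3]
        have ht0 : 0 < t := lt_of_lt_of_le hε0 h1
        exact Real.log_le_log (by positivity) (one_div_le_one_div_of_le hε0 h1)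
      · rw [if_neg h3]
        refine Real.log_nonneg ?_
        rw [le_div_iff₀ hε0, one_mul]
        linarith

/-- The truncated logarithmic potential
`Gw(x) = ∫ log(1/|x−y|) 1_{|x−y|≤1} w(y) dy`. -/
noncomputable def Gfun (w : ℝ × ℝ → ℝ) (x : ℝ × ℝ) : ℝ :=
  ∫ y : ℝ × ℝ, (if vnorm (x - y) ≤ 1 then Real.log (1 / vnorm (x - y)) else 0) * w y

/-- at a point where `Gw(x) ≥ log(1/ε) − L`, the mass outside the
ball of radius `Rε` is at most `(C + L)/log R`. -/
theorem stmt_14 : ∀ K > (0:ℝ), ∃ C > (0:ℝ), ∀ ε : ℝ, ε ∈ Set.Ioo (0:ℝ) (1/2) →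
    ∀ w : ℝ × ℝ → ℝ, Measurable w →
    (∀ᵐ x : ℝ × ℝ, 0 ≤ w x ∧ w x ≤ K / ε ^ 2) →
    Integrable w → (∫ x : ℝ × ℝ, w x) = 1 →
    ∀ L > (0:ℝ), ∀ x : ℝ × ℝ, Real.log (1 / ε) - L ≤ Gfun w x →
    ∀ R : ℝ, 1 < R → R ≤ 1 / ε →
    (∫ y in {y : ℝ × ℝ | R * ε ≤ vnorm (x - y)}, w y) ≤ (C + L) / Real.log R := by
  intro K hK
  refine ⟨7 * K, by positivity, ?_⟩
  rintro ε ⟨hε0, hε12⟩ w hwm hwb hwi hw1 L hL x hGx R hR1 hRle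
  have hε1 : ε < 1 := by linarith
  have hlogR : 0 < Real.log R := Real.log_pos hR1
  have hRε1 : R * ε ≤ 1 := by
    calc R * ε ≤ (1/ε) * ε := mul_le_mul_of_nonneg_right hRle hε0.le
    _ = 1 := by field_simp
  set S : Set (ℝ × ℝ) := {y | R * ε ≤ vnorm (x - y)} with hS_def
  have hvmeas : Measurable (fun y : ℝ × ℝ => vnorm (x - y)) :=
    (continuous_vnorm.comp (continuous_const.sub continuous_id)).measurable
  have hS : MeasurableSet S := hvmeas measurableSet_Ici
  set M := K / ε ^ 2 with hM_def
  have hM0 : 0 ≤ M := by positivity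
  set kfun : ℝ × ℝ → ℝ := fun y =>
    (if vnorm (x - y) ≤ 1 then Real.log (1 / vnorm (x - y)) else 0) * w y with hk_def
  set dom : ℝ × ℝ → ℝ := fun y =>
    (Real.log (1/ε) * w y - S.indicator (fun y => Real.log R * w y) y) + M * gker ε (x - y)
    with hdom_def
  have hpt : ∀ y : ℝ × ℝ, 0 ≤ w y → w y ≤ M → 0 ≤ kfun y ∧ kfun y ≤ dom y := by
    intro y h0 h1
    have ht0 : 0 ≤ vnorm (x - y) := vnorm_nonneg _
    have hker := ker_le (t := vnorm (x - y)) hε0 hε1 hR1 hRε1 ht0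
    have hgval : gker ε (x - y) = (if vnorm (x - y) < ε then Real.log (ε / vnorm (x - y)) else 0) :=
      rfl
    have hg0 : (0:ℝ) ≤ (if vnorm (x - y) < ε then Real.log (ε / vnorm (x - y)) else 0) := by
      rw [← hgval]; exact gker_nonneg _
    have hind : S.indicator (fun y => Real.log R * w y) y
        = (if R * ε ≤ vnorm (x - y) then Real.log R else 0) * w y := by
      by_cases hy : R * ε ≤ vnorm (x - y)
      · rw [Set.indicator_of_mem (show y ∈ S from hy) (fun y => Real.log R * w y), if_pos hy]
      · rw [Set.indicator_of_notMem (show y ∉ S from hy) (fun y => Real.log R * w y),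
          if_neg hy, zero_mul]
    constructor
    · exact mul_nonneg (ker_nonneg ht0) h0
    · calc kfun y = (if vnorm (x - y) ≤ 1 then Real.log (1 / vnorm (x - y)) else 0) * w y := rfl
      _ ≤ ((Real.log (1/ε) - (if R * ε ≤ vnorm (x - y) then Real.log R else 0)) +
            (if vnorm (x - y) < ε then Real.log (ε / vnorm (x - y)) else 0)) * w y :=
          mul_le_mul_of_nonneg_right hker h0
      _ = (Real.log (1/ε) * w y - (if R * ε ≤ vnorm (x - y) then Real.log R else 0) * w y) +
            (if vnorm (x - y) < ε then Real.log (ε / vnorm (x - y)) else 0) * w y := by ring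
      _ ≤ (Real.log (1/ε) * w y - (if R * ε ≤ vnorm (x - y) then Real.log R else 0) * w y) +
            (if vnorm (x - y) < ε then Real.log (ε / vnorm (x - y)) else 0) * M := by
          exact add_le_add_right (mul_le_mul_of_nonneg_left h1 hg0) _
      _ = dom y := by
          show _ = (Real.log (1/ε) * w y - S.indicator (fun y => Real.log R * w y) y)
            + M * gker ε (x - y)
          rw [hind, hgval]
          ring
  have hg'int : Integrable (fun y => gker ε (x - y)) := (gker_integrable hε0).comp_sub_left x
  have hI1 : Integrable (fun y => Real.log (1/ε) * w y) := hwi.const_mul _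
  have hI2 : Integrable (S.indicator (fun y => Real.log R * w y)) :=
    (hwi.const_mul _).indicator hS
  have hI3 : Integrable (fun y => M * gker ε (x - y)) := hg'int.const_mul M
  have hIdom : Integrable dom := by
    rw [hdom_def]
    exact (hI1.sub hI2).add hI3
  have hkmeas : Measurable kfun := by
    rw [hk_def]
    refine Measurable.mul ?_ hwm
    refine Measurable.ite (hvmeas measurableSet_Iic) ?_ measurable_const
    exact Real.measurable_log.comp (measurable_const.div hvmeas)
  have hIk : Integrable kfun := by
    refine hIdom.mono' hkmeas.aestronglyMeasurable ?_
    filter_upwards [hwb] with y hy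
    rw [Real.norm_eq_abs, abs_of_nonneg (hpt y hy.1 hy.2).1]
    exact (hpt y hy.1 hy.2).2
  have hGle : Gfun w x ≤ ∫ y, dom y := by
    have hGeq : Gfun w x = ∫ y, kfun y := rfl
    rw [hGeq]
    refine integral_mono_ae hIk hIdom ?_
    filter_upwards [hwb] with y hy
    exact (hpt y hy.1 hy.2).2
  have hdomval : (∫ y, dom y)
      = Real.log (1/ε) - Real.log R * (∫ y in S, w y) + M * (∫ z : ℝ × ℝ, gker ε z) := by
    have hIsub : Integrable (fun y => Real.log (1/ε) * w y
        - S.indicator (fun y => Real.log R * w y) y) := hI1.sub hI2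
    have e1 : (∫ y, dom y) = (∫ y, (Real.log (1/ε) * w y
        - S.indicator (fun y => Real.log R * w y) y)) + ∫ y, M * gker ε (x - y) :=
      integral_add hIsub hI3
    have e2 : (∫ y, (Real.log (1/ε) * w y - S.indicator (fun y => Real.log R * w y) y))
        = (∫ y, Real.log (1/ε) * w y) - ∫ y, S.indicator (fun y => Real.log R * w y) y :=
      integral_sub hI1 hI2
    rw [e1, e2, MeasureTheory.integral_const_mul, MeasureTheory.integral_const_mul, hw1, mul_one, MeasureTheory.integral_indicator hS,
      MeasureTheory.integral_const_mul, integral_sub_left_eq_self (gker ε) volume x]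
  have hgint_le : M * (∫ z : ℝ × ℝ, gker ε z) ≤ 7 * K := by
    calc M * (∫ z : ℝ × ℝ, gker ε z) ≤ M * (2 * π * ε ^ 2) :=
          mul_le_mul_of_nonneg_left (gker_integral_le hε0) hM0
    _ = 2 * π * K := by rw [hM_def]; field_simp
    _ ≤ 7 * K := by nlinarith [Real.pi_lt_d2, hK]
  have hfinal : Real.log R * (∫ y in S, w y) ≤ 7 * K + L := by
    have h5 := le_trans hGx hGle
    rw [hdomval] at h5
    linarith
  rw [le_div_iff₀ hlogR]
  linarith
end
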